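/- For any u, v, w in the symmetric group S_n with ℓ(w) = ℓ(u) + ℓ(v), and any simple reflection s_i such that ℓ(u s_i) > ℓ(u), ℓ(v s_i) > ℓ(v), and ℓ(w s_i) > ℓ(w), the Schubert structure constants of the complete flag variety Fℓ_n satisfy N_{u,v}^w = N_{u s_i, v}^{w s_i}; if instead ℓ(u s_i) > ℓ(u), ℓ(v s_i) > ℓ(v), and ℓ(w s_i) < ℓ(w), then N_{u,v}^w = 0. -/

import Mathlib

/-- The symmetric group `S_n`, realized as permutations of `Fin n`. -/
abbrev Sn (n : ℕ) := Equiv.Perm (Fin n)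

/-- The Coxeter length of a permutation: its number of inversions. -/
noncomputable def len {n : ℕ} (u : Sn n) : ℕ :=
  Set.ncard {p : Fin n × Fin n | p.1 < p.2 ∧ u p.2 < u p.1}

/-- The simple transposition `s_{r+1} = (r+1, r+2)` (0-indexed: swapping `r` and `r+1`). -/
def simpleRefl (n r : ℕ) (h : r + 1 < n) : Sn n :=
  Equiv.swap ⟨r, by omega⟩ ⟨r + 1, h⟩

open Classical in
/-- `N` is the family of Schubert structure constants of `H^*(Fℓ_n, ℤ)`: there is a
commutative ring with a linearly independent family `(σ^u)_{u ∈ S_n}` of Schubert classes,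
with `σ^{id} = 1`, products `σ^u ∪ σ^v = Σ_w N_{u,v}^w σ^w` graded by length, satisfying
Monk's rule for multiplication by the divisor classes `σ^{s_r}` (which characterizes the
cohomology ring of the complete flag variety together with its Schubert basis). -/
def IsSchubertConstants (n : ℕ) (N : Sn n → Sn n → Sn n → ℤ) : Prop :=
  ∃ (A : Type) (_ : CommRing A) (σ : Sn n → A),
    LinearIndependent ℤ σ ∧ σ 1 = 1 ∧
    (∀ u v : Sn n, σ u * σ v = ∑ w : Sn n, N u v w • σ w) ∧
    (∀ u v w : Sn n, N u v w ≠ 0 → len w = len u + len v) ∧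
    (∀ (r : ℕ) (h : r + 1 < n) (u : Sn n),
      σ (simpleRefl n r h) * σ u =
        ∑ w : Sn n, (if ∃ a b : Fin n, a.val ≤ r ∧ r < b.val ∧
            w = u * Equiv.swap a b ∧ len w = len u + 1 then (1 : ℤ) else 0) • σ w)

open Finset Matrix Equiv

namespace SchubRec

variable {n : ℕ}

def invF (u : Sn n) : Finset (Fin n × Fin n) :=
  Finset.univ.filter fun p => p.1 < p.2 ∧ u p.2 < u p.1

lemma len_eq_card (u : Sn n) : len u = (invF u).card := by
  rw [len, show {p : Fin n × Fin n | p.1 < p.2 ∧ u p.2 < u p.1} = ↑(invF u) by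
    ext p; simp [invF]]
  exact Set.ncard_coe_finset _

lemma mem_invF {u : Sn n} {p : Fin n × Fin n} :
    p ∈ invF u ↔ p.1 < p.2 ∧ u p.2 < u p.1 := by simp [invF]

def Rset (a b : Fin n) : Finset (Fin n × Fin n) :=
  Finset.univ.filter fun p => p.1 < p.2 ∧ ((p.1 = a ∧ p.2 ≤ b) ∨ (p.2 = b ∧ a ≤ p.1))

lemma mem_Rset {a b : Fin n} {p : Fin n × Fin n} :
    p ∈ Rset a b ↔ p.1 < p.2 ∧ ((p.1 = a ∧ p.2 ≤ b) ∨ (p.2 = b ∧ a ≤ p.1)) := by simp [Rset]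

lemma swap_pair_nonR {a b i j : Fin n} (hab : a < b) (hij : i < j)
    (h : ¬((i = a ∧ j ≤ b) ∨ (j = b ∧ a ≤ i))) :
    Equiv.swap a b i < Equiv.swap a b j ∧
      ¬((Equiv.swap a b i = a ∧ Equiv.swap a b j ≤ b) ∨
        (Equiv.swap a b j = b ∧ a ≤ Equiv.swap a b i)) := by
  simp only [Equiv.swap_apply_def]
  split_ifs <;>
    (simp only [Fin.lt_def, Fin.le_def, Fin.ext_iff, not_or, not_and_or, not_le, le_refl,
      true_and, and_true, true_or, or_true] at *) <;> omega

lemma swap_pair_R {a b i j : Fin n} (hab : a < b) (hij : i < j)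
    (h : (i = a ∧ j ≤ b) ∨ (j = b ∧ a ≤ i)) :
    Equiv.swap a b j < Equiv.swap a b i ∧
      ((Equiv.swap a b j = a ∧ Equiv.swap a b i ≤ b) ∨
        (Equiv.swap a b i = b ∧ a ≤ Equiv.swap a b j)) := by
  simp only [Equiv.swap_apply_def]
  split_ifs <;>
    (simp only [Fin.lt_def, Fin.le_def, Fin.ext_iff, not_or, not_and_or, not_le, le_refl,
      true_and, and_true, true_or, or_true] at *) <;> omega

lemma master (u : Sn n) {a b : Fin n} (hab : a < b) :
    len (u * Equiv.swap a b) + 2 * ((invF u ∩ Rset a b).card)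
      = len u + (Rset a b).card := by
  set t := Equiv.swap a b with ht
  have happ : ∀ (x : Fin n), (u * t) x = u (t x) := fun x => rfl
  have htt : ∀ x : Fin n, t (t x) = x := fun x => Equiv.swap_apply_self a b x
  -- first bijection : invF (u*t) \ R  ≃  invF u \ R
  have h1 : (invF (u * t) \ Rset a b).card = (invF u \ Rset a b).card := by
    apply Finset.card_bij' (fun p _ => (t p.1, t p.2)) (fun p _ => (t p.1, t p.2))
    · intro p hp
      rw [Finset.mem_sdiff, mem_invF, mem_Rset] at hp
      obtain ⟨⟨hlt, hval⟩, hnr⟩ := hp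
      have hnr' : ¬((p.1 = a ∧ p.2 ≤ b) ∨ (p.2 = b ∧ a ≤ p.1)) := fun hc => hnr ⟨hlt, hc⟩
      obtain ⟨ho, hc⟩ := swap_pair_nonR hab hlt hnr'
      rw [Finset.mem_sdiff, mem_invF, mem_Rset]
      refine ⟨⟨ho, ?_⟩, fun hc2 => hc hc2.2⟩
      simpa [happ] using hval
    · intro p hp
      rw [Finset.mem_sdiff, mem_invF, mem_Rset] at hp
      obtain ⟨⟨hlt, hval⟩, hnr⟩ := hp
      have hnr' : ¬((p.1 = a ∧ p.2 ≤ b) ∨ (p.2 = b ∧ a ≤ p.1)) := fun hc => hnr ⟨hlt, hc⟩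
      obtain ⟨ho, hc⟩ := swap_pair_nonR hab hlt hnr'
      rw [Finset.mem_sdiff, mem_invF, mem_Rset]
      exact ⟨⟨ho, by simpa [happ, htt] using hval⟩, fun hc2 => hc hc2.2⟩
    · intro p _; simp [htt]
    · intro p _; simp [htt]
  -- second bijection : invF (u*t) ∩ R ≃ R \ invF u
  have h2 : (invF (u * t) ∩ Rset a b).card = (Rset a b \ invF u).card := by
    apply Finset.card_bij' (fun p _ => (t p.2, t p.1)) (fun p _ => (t p.2, t p.1))
    · intro p hp
      rw [Finset.mem_inter, mem_invF, mem_Rset] at hp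
      obtain ⟨⟨hlt, hval⟩, _, hr⟩ := hp
      obtain ⟨ho, hc⟩ := swap_pair_R hab hlt hr
      rw [Finset.mem_sdiff, mem_Rset, mem_invF]
      refine ⟨⟨ho, hc⟩, fun hinv => ?_⟩
      have : u (t p.1) < u (t p.2) := hinv.2
      simp only [happ] at hval
      exact absurd hval (not_lt_of_gt this)
    · intro p hp
      rw [Finset.mem_sdiff, mem_Rset, mem_invF] at hp
      obtain ⟨⟨hlt, hr⟩, hninv⟩ := hp
      obtain ⟨ho, hc⟩ := swap_pair_R hab hlt hr
      rw [Finset.mem_inter, mem_invF, mem_Rset]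
      have hvne : u p.1 ≠ u p.2 := fun hh => (ne_of_lt hlt) (u.injective hh)
      have hv : u p.1 < u p.2 := by
        rcases lt_or_gt_of_ne hvne with hlt2 | hgt
        · exact hlt2
        · exact absurd ⟨hlt, hgt⟩ hninv
      refine ⟨⟨ho, ?_⟩, ho, hc⟩
      simpa [happ, htt] using hv
    · intro p _; simp [htt]
    · intro p _; simp [htt]
  have e1 := Finset.card_sdiff_add_card_inter (invF (u * t)) (Rset a b)
  have e2 := Finset.card_sdiff_add_card_inter (invF u) (Rset a b)
  have e3 := Finset.card_sdiff_add_card_inter (Rset a b) (invF u)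
  have e4 : (Rset a b ∩ invF u).card = (invF u ∩ Rset a b).card := by
    rw [Finset.inter_comm]
  rw [len_eq_card, len_eq_card]
  omega


lemma Rset_adj {a b : Fin n} (h : (a : ℕ) + 1 = (b : ℕ)) : Rset a b = {(a, b)} := by
  ext p
  simp only [mem_Rset, Finset.mem_singleton, Prod.ext_iff, Fin.lt_def, Fin.le_def, Fin.ext_iff]
  omega

lemma len_mul_adj (u : Sn n) {a b : Fin n} (h : (a : ℕ) + 1 = (b : ℕ)) :
    len (u * Equiv.swap a b) + 2 * (if u b < u a then 1 else 0) = len u + 1 := by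
  have hab : a < b := by rw [Fin.lt_def]; omega
  have hm := master u hab
  rw [Rset_adj h] at hm
  have hcard : (invF u ∩ {(a, b)}).card = if u b < u a then 1 else 0 := by
    split_ifs with hv
    · rw [Finset.inter_singleton_of_mem (mem_invF.2 ⟨hab, hv⟩)]; simp
    · rw [Finset.inter_singleton_of_notMem (fun hc => hv (mem_invF.1 hc).2)]; simp
  rw [hcard] at hm
  simpa using hm

lemma len_succ_adj (u : Sn n) {a b : Fin n} (h : (a : ℕ) + 1 = (b : ℕ)) (hv : u a < u b) :
    len (u * Equiv.swap a b) = len u + 1 := by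
  have := len_mul_adj u h
  rw [if_neg (not_lt_of_gt hv)] at this
  omega

lemma len_pred_adj (u : Sn n) {a b : Fin n} (h : (a : ℕ) + 1 = (b : ℕ)) (hv : u b < u a) :
    len u = len (u * Equiv.swap a b) + 1 := by
  have := len_mul_adj u h
  rw [if_pos hv] at this
  omega

lemma val_ne_adj (u : Sn n) {a b : Fin n} (h : (a : ℕ) + 1 = (b : ℕ)) : u a ≠ u b :=
  fun hc => by have := u.injective hc; rw [Fin.ext_iff] at this; omega

lemma lt_len_iff_adj (u : Sn n) {a b : Fin n} (h : (a : ℕ) + 1 = (b : ℕ)) :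
    len u < len (u * Equiv.swap a b) ↔ u a < u b := by
  constructor
  · intro hl
    rcases lt_or_gt_of_ne (val_ne_adj u h) with hv | hv
    · exact hv
    · have := len_pred_adj u h hv; omega
  · intro hv; have := len_succ_adj u h hv; omega

lemma gt_len_iff_adj (u : Sn n) {a b : Fin n} (h : (a : ℕ) + 1 = (b : ℕ)) :
    len (u * Equiv.swap a b) < len u ↔ u b < u a := by
  constructor
  · intro hl
    rcases lt_or_gt_of_ne (val_ne_adj u h) with hv | hv
    · have := len_succ_adj u h hv; omega
    · exact hv
  · intro hv; have := len_pred_adj u h hv; omega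


lemma val_ne (u : Sn n) {a b : Fin n} (h : a ≠ b) : u a ≠ u b :=
  fun hc => h (u.injective hc)

lemma Rset_decomp {a b : Fin n} (hab : a < b) :
    Rset a b = insert (a, b)
      (((Finset.Ioo a b).image (fun c => (a, c))) ∪ ((Finset.Ioo a b).image (fun c => (c, b)))) := by
  ext p
  obtain ⟨p1, p2⟩ := p
  simp only [mem_Rset, Finset.mem_insert, Finset.mem_union, Finset.mem_image, Finset.mem_Ioo,
    Prod.ext_iff]
  constructor
  · rintro ⟨hlt, (⟨h1, h2⟩ | ⟨h1, h2⟩)⟩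
    · subst h1
      rcases eq_or_lt_of_le h2 with he | hl
      · exact Or.inl ⟨rfl, he⟩
      · exact Or.inr (Or.inl ⟨p2, ⟨hlt, hl⟩, rfl, rfl⟩)
    · subst h1
      rcases eq_or_lt_of_le h2 with he | hl
      · exact Or.inl ⟨he.symm, rfl⟩
      · exact Or.inr (Or.inr ⟨p1, ⟨hl, hlt⟩, rfl, rfl⟩)
  · rintro (⟨h1, h2⟩ | ⟨c, ⟨hc1, hc2⟩, rfl, rfl⟩ | ⟨c, ⟨hc1, hc2⟩, rfl, rfl⟩)
    · subst h1; subst h2; exact ⟨hab, Or.inl ⟨rfl, le_refl _⟩⟩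
    · exact ⟨hc1, Or.inl ⟨rfl, le_of_lt hc2⟩⟩
    · exact ⟨hc2, Or.inr ⟨rfl, le_of_lt hc1⟩⟩

lemma Rset_card {a b : Fin n} (hab : a < b) :
    (Rset a b).card = 2 * (Finset.Ioo a b).card + 1 := by
  rw [Rset_decomp hab]
  have hinj1 : Function.Injective (fun c : Fin n => ((a, c) : Fin n × Fin n)) := by
    intro x y hxy; simpa [Prod.ext_iff] using hxy
  have hinj2 : Function.Injective (fun c : Fin n => ((c, b) : Fin n × Fin n)) := by
    intro x y hxy; simpa [Prod.ext_iff] using hxy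
  have hdisj : Disjoint ((Finset.Ioo a b).image (fun c => ((a, c) : Fin n × Fin n)))
      ((Finset.Ioo a b).image (fun c => ((c, b) : Fin n × Fin n))) := by
    rw [Finset.disjoint_left]
    rintro p hp1 hp2
    simp only [Finset.mem_image, Finset.mem_Ioo] at hp1 hp2
    obtain ⟨c, ⟨hc1, hc2⟩, rfl⟩ := hp1
    obtain ⟨c', ⟨_, _⟩, heq⟩ := hp2
    rw [Prod.ext_iff] at heq
    have hbc : b = c := heq.2
    rw [hbc] at hc2
    exact absurd hc2 (lt_irrefl _)
  have hnotmem : ((a, b) : Fin n × Fin n) ∉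
      ((Finset.Ioo a b).image (fun c => ((a, c) : Fin n × Fin n))) ∪
        ((Finset.Ioo a b).image (fun c => ((c, b) : Fin n × Fin n))) := by
    simp only [Finset.mem_union, Finset.mem_image, Finset.mem_Ioo, Prod.ext_iff, not_or]
    constructor
    · rintro ⟨c, ⟨_, hc2⟩, _, rfl⟩; exact absurd rfl (ne_of_lt hc2)
    · rintro ⟨c, ⟨hc1, _⟩, rfl, _⟩; exact absurd rfl (ne_of_lt hc1)
  rw [Finset.card_insert_of_notMem hnotmem, Finset.card_union_of_disjoint hdisj,
    Finset.card_image_of_injective _ hinj1, Finset.card_image_of_injective _ hinj2]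
  ring

lemma interR_card (u : Sn n) {a b : Fin n} (hab : a < b) :
    (invF u ∩ Rset a b).card =
      ((Finset.Ioo a b).filter (fun c => u c < u a)).card +
      ((Finset.Ioo a b).filter (fun c => u b < u c)).card +
      (if u b < u a then 1 else 0) := by
  have hset : invF u ∩ Rset a b =
      (((Finset.Ioo a b).filter (fun c => u c < u a)).image (fun c => (a, c)) ∪
        ((Finset.Ioo a b).filter (fun c => u b < u c)).image (fun c => (c, b))) ∪
      (if u b < u a then {(a, b)} else ∅) := by
    ext p
    obtain ⟨p1, p2⟩ := p
    simp only [Finset.mem_inter, mem_invF, mem_Rset, Finset.mem_union, Finset.mem_image,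
      Finset.mem_filter, Finset.mem_Ioo, Prod.ext_iff]
    constructor
    · rintro ⟨⟨hlt, hval⟩, _, (⟨h1, h2⟩ | ⟨h1, h2⟩)⟩
      · subst h1
        rcases eq_or_lt_of_le h2 with he | hl
        · subst he
          right; rw [if_pos hval]; simp
        · left; left; exact ⟨p2, ⟨⟨hlt, hl⟩, hval⟩, rfl, rfl⟩
      · subst h1
        rcases eq_or_lt_of_le h2 with he | hl
        · subst he
          right; rw [if_pos hval]; simp
        · left; right; exact ⟨p1, ⟨⟨hl, hlt⟩, hval⟩, rfl, rfl⟩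
    · rintro ((⟨c, ⟨⟨hc1, hc2⟩, hv⟩, rfl, rfl⟩ | ⟨c, ⟨⟨hc1, hc2⟩, hv⟩, rfl, rfl⟩) | hmem)
      · exact ⟨⟨hc1, hv⟩, hc1, Or.inl ⟨rfl, le_of_lt hc2⟩⟩
      · exact ⟨⟨hc2, hv⟩, hc2, Or.inr ⟨rfl, le_of_lt hc1⟩⟩
      · split_ifs at hmem with hba
        · simp only [Finset.mem_singleton, Prod.ext_iff] at hmem
          obtain ⟨rfl, rfl⟩ := hmem
          exact ⟨⟨hab, hba⟩, hab, Or.inl ⟨rfl, le_refl _⟩⟩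
        · simp at hmem
  rw [hset]
  have hinj1 : Function.Injective (fun c : Fin n => ((a, c) : Fin n × Fin n)) := by
    intro x y hxy; simpa [Prod.ext_iff] using hxy
  have hinj2 : Function.Injective (fun c : Fin n => ((c, b) : Fin n × Fin n)) := by
    intro x y hxy; simpa [Prod.ext_iff] using hxy
  have hdisj : Disjoint
      (((Finset.Ioo a b).filter (fun c => u c < u a)).image (fun c => ((a, c) : Fin n × Fin n)))
      (((Finset.Ioo a b).filter (fun c => u b < u c)).image (fun c => ((c, b) : Fin n × Fin n))) := by
    rw [Finset.disjoint_left]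
    rintro p hp1 hp2
    simp only [Finset.mem_image, Finset.mem_filter, Finset.mem_Ioo] at hp1 hp2
    obtain ⟨c, ⟨⟨hc1, hc2⟩, _⟩, rfl⟩ := hp1
    obtain ⟨c', ⟨⟨_, _⟩, _⟩, heq⟩ := hp2
    rw [Prod.ext_iff] at heq
    have hbc : b = c := heq.2
    rw [hbc] at hc2
    exact absurd hc2 (lt_irrefl _)
  have hdisj2 : Disjoint
      ((((Finset.Ioo a b).filter (fun c => u c < u a)).image (fun c => ((a, c) : Fin n × Fin n))) ∪
        (((Finset.Ioo a b).filter (fun c => u b < u c)).image (fun c => ((c, b) : Fin n × Fin n))))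
      (if u b < u a then ({((a, b) : Fin n × Fin n)} : Finset (Fin n × Fin n)) else ∅) := by
    split_ifs with hba
    · rw [Finset.disjoint_right]
      rintro p hp1 hp2
      simp only [Finset.mem_singleton] at hp1
      subst hp1
      simp only [Finset.mem_union, Finset.mem_image, Finset.mem_filter, Finset.mem_Ioo,
        Prod.ext_iff] at hp2
      rcases hp2 with ⟨c, ⟨⟨_, hc2⟩, _⟩, _, rfl⟩ | ⟨c, ⟨⟨hc1, _⟩, _⟩, rfl, _⟩
      · exact absurd rfl (ne_of_lt hc2)
      · exact absurd rfl (ne_of_lt hc1)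
    · exact Finset.disjoint_empty_right _
  rw [Finset.card_union_of_disjoint hdisj2, Finset.card_union_of_disjoint hdisj,
    Finset.card_image_of_injective _ hinj1, Finset.card_image_of_injective _ hinj2]
  congr 1
  split_ifs <;> simp

lemma cover_fwd (u : Sn n) {a b : Fin n} (hab : a < b)
    (hlen : len (u * Equiv.swap a b) = len u + 1) :
    u a < u b ∧ ∀ c, a < c → c < b → ¬(u a < u c ∧ u c < u b) := by
  have hm := master u hab
  rw [hlen, Rset_card hab, interR_card u hab] at hm
  set A := (Finset.Ioo a b).filter (fun c => u c < u a) with hA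
  set B := (Finset.Ioo a b).filter (fun c => u b < u c) with hB
  set m := (Finset.Ioo a b).card with hmdef
  have hvne : u a ≠ u b := val_ne u (ne_of_lt hab)
  have hub : u a < u b := by
    by_contra hc
    have hba : u b < u a := lt_of_le_of_ne (le_of_not_gt hc) (Ne.symm hvne)
    rw [if_pos hba] at hm
    -- Ioo ⊆ A ∪ B
    have hsub : Finset.Ioo a b ⊆ A ∪ B := by
      intro c hc'
      rw [Finset.mem_union, hA, hB, Finset.mem_filter, Finset.mem_filter]
      by_contra hcc
      push_neg at hcc
      obtain ⟨hc1, hc2⟩ := hcc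
      have h1 : u a ≤ u c := hc1 hc'
      have h2 : u c ≤ u b := hc2 hc'
      exact absurd (le_trans h1 h2) (not_le_of_gt hba)
    have hcard := Finset.card_le_card hsub
    have := Finset.card_union_le A B
    omega
  rw [if_neg (not_lt_of_gt hub)] at hm
  have hABd : Disjoint A B := by
    rw [Finset.disjoint_left]
    intro c hc1 hc2
    rw [hA, Finset.mem_filter] at hc1
    rw [hB, Finset.mem_filter] at hc2
    exact absurd (lt_trans (lt_trans hc2.2 hc1.2) hub) (lt_irrefl _)
  have hABsub : A ∪ B ⊆ Finset.Ioo a b := by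
    intro c hc
    rw [Finset.mem_union, hA, hB, Finset.mem_filter, Finset.mem_filter] at hc
    rcases hc with h | h <;> exact h.1
  have hABcard : (A ∪ B).card = m := by
    rw [Finset.card_union_of_disjoint hABd]; omega
  have hABeq : A ∪ B = Finset.Ioo a b := by
    apply Finset.eq_of_subset_of_card_le hABsub
    omega
  refine ⟨hub, fun c hc1 hc2 ⟨hv1, hv2⟩ => ?_⟩
  have hcm : c ∈ A ∪ B := by rw [hABeq, Finset.mem_Ioo]; exact ⟨hc1, hc2⟩
  rw [Finset.mem_union, hA, hB, Finset.mem_filter, Finset.mem_filter] at hcm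
  rcases hcm with h | h
  · exact absurd (lt_trans hv1 h.2) (lt_irrefl _)
  · exact absurd (lt_trans hv2 h.2) (lt_irrefl _)

lemma cover_bwd (u : Sn n) {a b : Fin n} (hab : a < b) (hub : u a < u b)
    (hnob : ∀ c, a < c → c < b → ¬(u a < u c ∧ u c < u b)) :
    len (u * Equiv.swap a b) = len u + 1 := by
  have hm := master u hab
  rw [Rset_card hab, interR_card u hab] at hm
  set A := (Finset.Ioo a b).filter (fun c => u c < u a) with hA
  set B := (Finset.Ioo a b).filter (fun c => u b < u c) with hB
  set m := (Finset.Ioo a b).card with hmdef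
  rw [if_neg (not_lt_of_gt hub)] at hm
  have hABd : Disjoint A B := by
    rw [Finset.disjoint_left]
    intro c hc1 hc2
    rw [hA, Finset.mem_filter] at hc1
    rw [hB, Finset.mem_filter] at hc2
    exact absurd (lt_trans (lt_trans hc2.2 hc1.2) hub) (lt_irrefl _)
  have hABeq : A ∪ B = Finset.Ioo a b := by
    apply Finset.Subset.antisymm
    · intro c hc
      rw [Finset.mem_union, hA, hB, Finset.mem_filter, Finset.mem_filter] at hc
      rcases hc with h | h <;> exact h.1
    · intro c hc
      rw [Finset.mem_union, hA, hB, Finset.mem_filter, Finset.mem_filter]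
      rw [Finset.mem_Ioo] at hc
      have hca : u c ≠ u a := val_ne u (ne_of_gt hc.1)
      have hcb : u b ≠ u c := val_ne u (ne_of_gt hc.2)
      rcases lt_or_gt_of_ne hca with h1 | h1
      · exact Or.inl ⟨Finset.mem_Ioo.2 hc, h1⟩
      · rcases lt_or_gt_of_ne hcb with h2 | h2
        · exact Or.inr ⟨Finset.mem_Ioo.2 hc, h2⟩
        · exact absurd ⟨h1, h2⟩ (hnob c hc.1 hc.2)
  have : A.card + B.card = m := by
    rw [← Finset.card_union_of_disjoint hABd, hABeq]
  omega


variable {r : ℕ}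

def posr (hr : r + 1 < n) : Fin n := ⟨r, by omega⟩
def posr1 (hr : r + 1 < n) : Fin n := ⟨r + 1, hr⟩

@[simp] lemma val_posr (hr : r + 1 < n) : ((posr hr : Fin n) : ℕ) = r := rfl
@[simp] lemma val_posr1 (hr : r + 1 < n) : ((posr1 hr : Fin n) : ℕ) = r + 1 := rfl

lemma posr_ne (hr : r + 1 < n) : (posr hr : Fin n) ≠ posr1 hr := by
  simp [Fin.ext_iff]

lemma srefl_eq (hr : r + 1 < n) : simpleRefl n r hr = Equiv.swap (posr hr) (posr1 hr) := rfl

lemma s_posr (hr : r + 1 < n) : simpleRefl n r hr (posr hr) = posr1 hr := by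
  rw [srefl_eq]; exact Equiv.swap_apply_left _ _

lemma s_posr1 (hr : r + 1 < n) : simpleRefl n r hr (posr1 hr) = posr hr := by
  rw [srefl_eq]; exact Equiv.swap_apply_right _ _

lemma s_other (hr : r + 1 < n) {c : Fin n} (h1 : c ≠ posr hr) (h2 : c ≠ posr1 hr) :
    simpleRefl n r hr c = c := by
  rw [srefl_eq]; exact Equiv.swap_apply_of_ne_of_ne h1 h2

lemma s_mul_s (hr : r + 1 < n) : simpleRefl n r hr * simpleRefl n r hr = 1 := by
  rw [srefl_eq]; exact Equiv.swap_mul_self _ _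

lemma s_inv (hr : r + 1 < n) : (simpleRefl n r hr)⁻¹ = simpleRefl n r hr := by
  rw [srefl_eq]; exact Equiv.swap_inv _ _

lemma mul_s_s (hr : r + 1 < n) (u : Sn n) :
    u * simpleRefl n r hr * simpleRefl n r hr = u := by
  rw [mul_assoc, s_mul_s, mul_one]

lemma conj_swap (hr : r + 1 < n) (u : Sn n) (a b : Fin n) :
    u * Equiv.swap a b * simpleRefl n r hr =
      (u * simpleRefl n r hr) *
        Equiv.swap (simpleRefl n r hr a) (simpleRefl n r hr b) := by
  have h := Equiv.swap_apply_apply (simpleRefl n r hr) a b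
  rw [s_inv hr] at h
  rw [h, ← mul_assoc, mul_assoc u (simpleRefl n r hr) (simpleRefl n r hr * Equiv.swap a b),
    ← mul_assoc (simpleRefl n r hr) (simpleRefl n r hr) (Equiv.swap a b), s_mul_s hr, one_mul]

lemma swap_unique {a b c d : Fin n} (hab : a ≠ b)
    (h : Equiv.swap a b = Equiv.swap c d) : (a = c ∧ b = d) ∨ (a = d ∧ b = c) := by
  have ha : Equiv.swap c d a = b := by rw [← h]; exact Equiv.swap_apply_left a b
  rw [Equiv.swap_apply_def] at ha
  split_ifs at ha with h1 h2
  · exact Or.inl ⟨h1, ha.symm⟩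
  · exact Or.inr ⟨h2, ha.symm⟩
  · exact absurd ha hab

/-- key "ascent transfer": if `u` ascends at `r` and `u·t_{ab}` is a cover
(with `(a,b) ≠ (r,r+1)`), then `u·t_{ab}` still ascends at `r`. -/
lemma core (hr : r + 1 < n) {u : Sn n} {a b : Fin n} (hab : a < b)
    (hasc : u (posr hr) < u (posr1 hr)) (hne : ¬(a = posr hr ∧ b = posr1 hr))
    (hcov1 : u a < u b)
    (hcov2 : ∀ c, a < c → c < b → ¬(u a < u c ∧ u c < u b)) :
    (u * Equiv.swap a b) (posr hr) < (u * Equiv.swap a b) (posr1 hr) := by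
  have happ : ∀ x, (u * Equiv.swap a b) x = u (Equiv.swap a b x) := fun x => rfl
  have hprlt : (posr hr : Fin n) < posr1 hr := by rw [Fin.lt_def]; simp
  rcases eq_or_ne a (posr hr) with hapr | hapr
  · -- a = posr; b ≠ posr1
    have hbpr1 : b ≠ posr1 hr := fun hb => hne ⟨hapr, hb⟩
    have hbval : (b : ℕ) ≥ r + 2 := by
      have h1 : (a : ℕ) < (b : ℕ) := hab
      have h2 : (b : ℕ) ≠ r + 1 := fun hc => hbpr1 (Fin.ext (by simp [hc]))
      have h3 : (a : ℕ) = r := by rw [hapr]; simp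
      omega
    have hb1 : (posr1 hr : Fin n) ≠ a := by
      rw [hapr]; exact (posr_ne hr).symm
    have hb2 : (posr1 hr : Fin n) ≠ b := fun hc => hbpr1 hc.symm
    have hswpr : Equiv.swap a b (posr hr) = b := by rw [← hapr]; exact Equiv.swap_apply_left a b
    have hswpr1 : Equiv.swap a b (posr1 hr) = posr1 hr :=
      Equiv.swap_apply_of_ne_of_ne hb1 hb2
    rw [happ, happ, hswpr, hswpr1]
    -- goal : u b < u (posr1 hr)
    have hpr1b : (posr1 hr : Fin n) < b := by rw [Fin.lt_def]; simp; omega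
    have hapr1' : a < posr1 hr := by rw [hapr]; exact hprlt
    have hint := hcov2 (posr1 hr) hapr1' hpr1b
    by_contra hcc
    have hlt : u (posr1 hr) < u b :=
      lt_of_le_of_ne (le_of_not_gt hcc) (val_ne u hb2)
    rw [hapr] at hint
    exact hint ⟨hasc, hlt⟩
  · rcases eq_or_ne b (posr hr) with hbpr | hbpr
    · -- b = posr, a < posr
      have ha1 : a ≠ posr1 hr := fun hc => by
        rw [hc, hbpr, Fin.lt_def] at hab; simp at hab
      have hswpr : Equiv.swap a b (posr hr) = a := by rw [← hbpr]; exact Equiv.swap_apply_right a b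
      have hswpr1 : Equiv.swap a b (posr1 hr) = posr1 hr := by
        apply Equiv.swap_apply_of_ne_of_ne (Ne.symm ha1)
        rw [hbpr]; exact (posr_ne hr).symm
      rw [happ, happ, hswpr, hswpr1]
      rw [hbpr] at hcov1
      exact lt_trans hcov1 hasc
    · rcases eq_or_ne a (posr1 hr) with hapr1 | hapr1
      · -- a = posr1, b > posr1
        have hp2 : (posr hr : Fin n) ≠ b := fun hc => hbpr hc.symm
        have hswpr : Equiv.swap a b (posr hr) = posr hr := by
          apply Equiv.swap_apply_of_ne_of_ne (fun hc => hapr hc.symm) hp2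
        have hswpr1 : Equiv.swap a b (posr1 hr) = b := by
          rw [← hapr1]; exact Equiv.swap_apply_left a b
        rw [happ, happ, hswpr, hswpr1]
        rw [hapr1] at hcov1
        exact lt_trans hasc hcov1
      · rcases eq_or_ne b (posr1 hr) with hbpr1 | hbpr1
        · -- b = posr1, a < posr
          have haval : (a : ℕ) < r := by
            have h1 : (a : ℕ) < (b : ℕ) := hab
            have h2 : (b : ℕ) = r + 1 := by rw [hbpr1]; simp
            have h3 : (a : ℕ) ≠ r := fun hc => hapr (Fin.ext (by simp [hc]))
            omega
          have hapr' : a < posr hr := by rw [Fin.lt_def]; simp; omega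
          have hswpr : Equiv.swap a b (posr hr) = posr hr :=
            Equiv.swap_apply_of_ne_of_ne (Ne.symm hapr) (fun hc => hbpr hc.symm)
          have hswpr1 : Equiv.swap a b (posr1 hr) = a := by
            rw [← hbpr1]; exact Equiv.swap_apply_right a b
          rw [happ, happ, hswpr, hswpr1]
          -- goal: u posr < u a
          have hprb : (posr hr : Fin n) < b := by rw [hbpr1]; exact hprlt
          have hint := hcov2 (posr hr) hapr' hprb
          by_contra hcc
          have hlt : u a < u (posr hr) :=
            lt_of_le_of_ne (le_of_not_gt hcc) (val_ne u (ne_of_lt hapr'))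
          rw [hbpr1] at hint
          exact hint ⟨hlt, hasc⟩
        · have hswpr : Equiv.swap a b (posr hr) = posr hr :=
            Equiv.swap_apply_of_ne_of_ne (Ne.symm hapr) (Ne.symm hbpr)
          have hswpr1 : Equiv.swap a b (posr1 hr) = posr1 hr :=
            Equiv.swap_apply_of_ne_of_ne (Ne.symm hapr1) (Ne.symm hbpr1)
          rw [happ, happ, hswpr, hswpr1]
          exact hasc


lemma posr_succ_val (hr : r + 1 < n) : ((posr hr : Fin n) : ℕ) + 1 = ((posr1 hr : Fin n) : ℕ) := rfl

lemma len_s_succ (hr : r + 1 < n) (u : Sn n) (h : u (posr hr) < u (posr1 hr)) :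
    len (u * simpleRefl n r hr) = len u + 1 := by
  rw [srefl_eq]; exact len_succ_adj u (posr_succ_val hr) h

lemma len_s_pred (hr : r + 1 < n) (u : Sn n) (h : u (posr1 hr) < u (posr hr)) :
    len u = len (u * simpleRefl n r hr) + 1 := by
  rw [srefl_eq]; exact len_pred_adj u (posr_succ_val hr) h

lemma lt_len_s_iff (hr : r + 1 < n) (u : Sn n) :
    len u < len (u * simpleRefl n r hr) ↔ u (posr hr) < u (posr1 hr) := by
  rw [srefl_eq]; exact lt_len_iff_adj u (posr_succ_val hr)

lemma gt_len_s_iff (hr : r + 1 < n) (u : Sn n) :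
    len (u * simpleRefl n r hr) < len u ↔ u (posr1 hr) < u (posr hr) := by
  rw [srefl_eq]; exact gt_len_iff_adj u (posr_succ_val hr)

lemma u_ne_rr1 (hr : r + 1 < n) (u : Sn n) : u (posr hr) ≠ u (posr1 hr) :=
  val_ne u (posr_ne hr)

/-- The Monk cover condition. -/
def Mcond (j : ℤ) (w u : Sn n) : Prop :=
  ∃ a b : Fin n, (a.val : ℤ) ≤ j ∧ j < (b.val : ℤ) ∧
    w = u * Equiv.swap a b ∧ len w = len u + 1

open Classical in
/-- Monk matrix for multiplication by `σ_{s_j}` (zero for `j` out of range). -/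
noncomputable def Mk (n : ℕ) (j : ℤ) : Matrix (Sn n) (Sn n) ℤ :=
  Matrix.of fun w u => if Mcond j w u then 1 else 0

open Classical in
/-- The divided-difference matrix `∂_r`. -/
noncomputable def Dmat (hr : r + 1 < n) : Matrix (Sn n) (Sn n) ℤ :=
  Matrix.of fun z x =>
    if x (posr1 hr) < x (posr hr) ∧ z = x * simpleRefl n r hr then 1 else 0

open Classical in
lemma Mk_apply (j : ℤ) (w u : Sn n) : Mk n j w u = if Mcond j w u then 1 else 0 := by
  rw [Mk]; simp only [Matrix.of_apply]

open Classical in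
lemma Dmat_apply (hr : r + 1 < n) (z x : Sn n) :
    Dmat hr z x =
      if x (posr1 hr) < x (posr hr) ∧ z = x * simpleRefl n r hr then 1 else 0 := by
  rw [Dmat]; simp only [Matrix.of_apply]

open Classical in
lemma Dmat_mul (hr : r + 1 < n) (X : Matrix (Sn n) (Sn n) ℤ) (z u : Sn n) :
    (Dmat hr * X) z u =
      if z (posr hr) < z (posr1 hr) then X (z * simpleRefl n r hr) u else 0 := by
  rw [Matrix.mul_apply]
  rw [Finset.sum_eq_single (z * simpleRefl n r hr)]
  · rw [Dmat_apply]
    have e1 : (z * simpleRefl n r hr) (posr1 hr) = z (posr hr) := by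
      show z (simpleRefl n r hr (posr1 hr)) = z (posr hr)
      rw [s_posr1]
    have e2 : (z * simpleRefl n r hr) (posr hr) = z (posr1 hr) := by
      show z (simpleRefl n r hr (posr hr)) = z (posr1 hr)
      rw [s_posr]
    rw [e1, e2, mul_s_s]
    simp only [eq_self_iff_true, and_true]
    split_ifs with h
    · rw [one_mul]
    · rw [zero_mul]
  · intro x _ hx
    rw [Dmat_apply]
    rw [if_neg, zero_mul]
    rintro ⟨_, rfl⟩
    exact hx (by rw [mul_s_s])
  · intro hu; exact absurd (Finset.mem_univ _) hu

open Classical in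
lemma mul_Dmat (hr : r + 1 < n) (X : Matrix (Sn n) (Sn n) ℤ) (z u : Sn n) :
    (X * Dmat hr) z u =
      if u (posr1 hr) < u (posr hr) then X z (u * simpleRefl n r hr) else 0 := by
  rw [Matrix.mul_apply]
  rw [Finset.sum_eq_single (u * simpleRefl n r hr)]
  · rw [Dmat_apply]
    simp only [eq_self_iff_true, and_true]
    split_ifs with h
    · rw [mul_one]
    · rw [mul_zero]
  · intro x _ hx
    rw [Dmat_apply, if_neg, mul_zero]
    rintro ⟨_, h2⟩
    exact hx h2
  · intro hu; exact absurd (Finset.mem_univ _) hu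


lemma sval_le (hr : r + 1 < n) {j : ℤ} (hj : j ≠ (r : ℤ)) {a : Fin n}
    (h : (a.val : ℤ) ≤ j) : (((simpleRefl n r hr a) : Fin n).val : ℤ) ≤ j := by
  rcases eq_or_ne a (posr hr) with rfl | h1
  · rw [s_posr]
    have : ((posr hr : Fin n).val : ℤ) = (r : ℤ) := by simp
    rw [this] at h
    have : ((posr1 hr : Fin n).val : ℤ) = (r : ℤ) + 1 := by simp
    rw [this]
    omega
  · rcases eq_or_ne a (posr1 hr) with rfl | h2
    · rw [s_posr1]
      have h1' : ((posr1 hr : Fin n).val : ℤ) = (r : ℤ) + 1 := by simp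
      rw [h1'] at h
      have : ((posr hr : Fin n).val : ℤ) = (r : ℤ) := by simp
      rw [this]
      omega
    · rw [s_other hr h1 h2]; exact h

lemma sval_gt (hr : r + 1 < n) {j : ℤ} (hj : j ≠ (r : ℤ)) {b : Fin n}
    (h : j < (b.val : ℤ)) : j < (((simpleRefl n r hr b) : Fin n).val : ℤ) := by
  rcases eq_or_ne b (posr hr) with rfl | h1
  · rw [s_posr]
    have : ((posr hr : Fin n).val : ℤ) = (r : ℤ) := by simp
    rw [this] at h
    have : ((posr1 hr : Fin n).val : ℤ) = (r : ℤ) + 1 := by simp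
    rw [this]
    omega
  · rcases eq_or_ne b (posr1 hr) with rfl | h2
    · rw [s_posr1]
      have h1' : ((posr1 hr : Fin n).val : ℤ) = (r : ℤ) + 1 := by simp
      rw [h1'] at h
      have : ((posr hr : Fin n).val : ℤ) = (r : ℤ) := by simp
      rw [this]
      omega
    · rw [s_other hr h1 h2]; exact h

lemma ab_lt {j : ℤ} {a b : Fin n} (ha : (a.val : ℤ) ≤ j) (hb : j < (b.val : ℤ)) : a < b := by
  rw [Fin.lt_def]; omega

lemma not_rr1 (hr : r + 1 < n) {j : ℤ} (hj : j ≠ (r : ℤ)) {a b : Fin n}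
    (ha : (a.val : ℤ) ≤ j) (hb : j < (b.val : ℤ)) :
    ¬(a = posr hr ∧ b = posr1 hr) := by
  rintro ⟨rfl, rfl⟩
  simp only [val_posr, val_posr1] at ha hb
  omega

lemma I1_fwd (hr : r + 1 < n) {j : ℤ} (hj : j ≠ (r : ℤ)) {z u : Sn n}
    (hz : z (posr hr) < z (posr1 hr)) (hm : Mcond j (z * simpleRefl n r hr) u) :
    u (posr1 hr) < u (posr hr) ∧ Mcond j z (u * simpleRefl n r hr) := by
  obtain ⟨a, b, hja, hjb, heq, hlen⟩ := hm
  have hab : a < b := ab_lt hja hjb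
  have hlen' : len (u * Equiv.swap a b) = len u + 1 := by rw [← heq]; exact hlen
  obtain ⟨hc1, hc2⟩ := cover_fwd u hab hlen'
  have hne := not_rr1 hr hj hja hjb
  have hdesc : u (posr1 hr) < u (posr hr) := by
    by_contra hcc
    have hasc : u (posr hr) < u (posr1 hr) :=
      lt_of_le_of_ne (le_of_not_gt hcc) (u_ne_rr1 hr u)
    have hco := core hr hab hasc hne hc1 hc2
    rw [← heq] at hco
    have e1 : (z * simpleRefl n r hr) (posr hr) = z (posr1 hr) := by
      show z (simpleRefl n r hr (posr hr)) = z (posr1 hr); rw [s_posr]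
    have e2 : (z * simpleRefl n r hr) (posr1 hr) = z (posr hr) := by
      show z (simpleRefl n r hr (posr1 hr)) = z (posr hr); rw [s_posr1]
    rw [e1, e2] at hco
    exact absurd (lt_trans hco hz) (lt_irrefl _)
  refine ⟨hdesc, simpleRefl n r hr a, simpleRefl n r hr b,
    sval_le hr hj hja, sval_gt hr hj hjb, ?_, ?_⟩
  · -- z = (u * s) * swap (s a) (s b)
    have : z = (z * simpleRefl n r hr) * simpleRefl n r hr := by rw [mul_s_s]
    rw [this, heq, conj_swap]
  · -- len z = len (u * s) + 1
    have h1 : len (z * simpleRefl n r hr) = len z + 1 := len_s_succ hr z hz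
    have h2 : len u = len (u * simpleRefl n r hr) + 1 := len_s_pred hr u hdesc
    omega

lemma I1_bwd (hr : r + 1 < n) {j : ℤ} (hj : j ≠ (r : ℤ)) {z u : Sn n}
    (hdesc : u (posr1 hr) < u (posr hr)) (hm : Mcond j z (u * simpleRefl n r hr)) :
    z (posr hr) < z (posr1 hr) ∧ Mcond j (z * simpleRefl n r hr) u := by
  obtain ⟨p, q, hjp, hjq, heq, hlen⟩ := hm
  set u' := u * simpleRefl n r hr with hu'
  have hab : p < q := ab_lt hjp hjq
  have hlen' : len (u' * Equiv.swap p q) = len u' + 1 := by rw [← heq]; exact hlen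
  obtain ⟨hc1, hc2⟩ := cover_fwd u' hab hlen'
  have hne := not_rr1 hr hj hjp hjq
  have hasc' : u' (posr hr) < u' (posr1 hr) := by
    have e1 : u' (posr hr) = u (posr1 hr) := by
      rw [hu']; show u (simpleRefl n r hr (posr hr)) = u (posr1 hr); rw [s_posr]
    have e2 : u' (posr1 hr) = u (posr hr) := by
      rw [hu']; show u (simpleRefl n r hr (posr1 hr)) = u (posr hr); rw [s_posr1]
    rw [e1, e2]; exact hdesc
  have hzasc : z (posr hr) < z (posr1 hr) := by
    have hco := core hr hab hasc' hne hc1 hc2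
    rw [← heq] at hco
    exact hco
  refine ⟨hzasc, simpleRefl n r hr p, simpleRefl n r hr q,
    sval_le hr hj hjp, sval_gt hr hj hjq, ?_, ?_⟩
  · -- z * s = u * swap (s p) (s q)
    rw [heq, hu', conj_swap, mul_s_s]
  · have h1 : len (z * simpleRefl n r hr) = len z + 1 := len_s_succ hr z hzasc
    have h2 : len u = len u' + 1 := len_s_pred hr u hdesc
    omega

open Classical in
lemma CI1 (hr : r + 1 < n) {j : ℤ} (hj : j ≠ (r : ℤ)) :
    Dmat hr * Mk n j = Mk n j * Dmat hr := by
  ext z u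
  rw [Dmat_mul, mul_Dmat, Mk_apply, Mk_apply]
  by_cases h1 : z (posr hr) < z (posr1 hr)
  · by_cases h2 : Mcond j (z * simpleRefl n r hr) u
    · obtain ⟨hd, hm⟩ := I1_fwd hr hj h1 h2
      rw [if_pos h1, if_pos h2, if_pos hd, if_pos hm]
    · rw [if_pos h1, if_neg h2]
      by_cases h3 : u (posr1 hr) < u (posr hr)
      · rw [if_pos h3, if_neg (fun hm => h2 (I1_bwd hr hj h3 hm).2)]
      · rw [if_neg h3]
  · rw [if_neg h1]
    by_cases h3 : u (posr1 hr) < u (posr hr)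
    · rw [if_pos h3]
      by_cases h4 : Mcond j z (u * simpleRefl n r hr)
      · exact absurd (I1_bwd hr hj h3 h4).1 h1
      · rw [if_neg h4]
    · rw [if_neg h3]


lemma eq_posr (hr : r + 1 < n) {a : Fin n} (h : (a : ℕ) = r) : a = posr hr :=
  Fin.ext (by simpa using h)

lemma eq_posr1 (hr : r + 1 < n) {a : Fin n} (h : (a : ℕ) = r + 1) : a = posr1 hr :=
  Fin.ext (by simpa using h)

lemma ne_posr (hr : r + 1 < n) {a : Fin n} (h : (a : ℕ) ≠ r) : a ≠ posr hr :=
  fun hc => h (by rw [hc]; simp)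

lemma ne_posr1 (hr : r + 1 < n) {a : Fin n} (h : (a : ℕ) ≠ r + 1) : a ≠ posr1 hr :=
  fun hc => h (by rw [hc]; simp)

lemma Mk_entry_of_rep (j : ℤ) {z u' : Sn n} {p q : Fin n} (hpq : p < q)
    (heq : z = u' * Equiv.swap p q) (hlen : len z = len u' + 1) :
    Mk n j z u' = if ((p : ℕ) : ℤ) ≤ j ∧ j < ((q : ℕ) : ℤ) then 1 else 0 := by
  rw [Mk_apply]
  by_cases h : ((p : ℕ) : ℤ) ≤ j ∧ j < ((q : ℕ) : ℤ)
  · rw [if_pos h, if_pos ⟨p, q, h.1, h.2, heq, hlen⟩]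
  · rw [if_neg h, if_neg]
    rintro ⟨a, b, ha, hb, heqa, _⟩
    rw [heq] at heqa
    have hsw : Equiv.swap p q = Equiv.swap a b := mul_left_cancel heqa
    rcases swap_unique (ne_of_lt hpq) hsw with ⟨rfl, rfl⟩ | ⟨rfl, rfl⟩
    · exact h ⟨ha, hb⟩
    · rw [Fin.lt_def] at hpq; omega

lemma Mk_entry_zero (j : ℤ) {z u' : Sn n}
    (h : ¬∃ p q : Fin n, p < q ∧ z = u' * Equiv.swap p q ∧ len z = len u' + 1) :
    Mk n j z u' = 0 := by
  rw [Mk_apply, if_neg]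
  rintro ⟨a, b, ha, hb, heqa, hlena⟩
  exact h ⟨a, b, ab_lt ha hb, heqa, hlena⟩

lemma Mcond_s (hr : r + 1 < n) {u : Sn n} (h : u (posr hr) < u (posr1 hr)) :
    Mcond (r : ℤ) (u * simpleRefl n r hr) u := by
  refine ⟨posr hr, posr1 hr, by simp, by simp, ?_, len_s_succ hr u h⟩
  rw [srefl_eq]

/-- `z*s` written through the conjugated transposition. -/
lemma zs_rep (hr : r + 1 < n) {z u' : Sn n} {p q : Fin n}
    (heq : z = u' * Equiv.swap p q) :
    z * simpleRefl n r hr = (u' * simpleRefl n r hr) *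
      Equiv.swap (simpleRefl n r hr p) (simpleRefl n r hr q) := by
  rw [heq, conj_swap]

open Classical in
lemma CI2 (hr : r + 1 < n) :
    Dmat hr * Mk n (r : ℤ) =
      1 + (Mk n ((r : ℤ) - 1) + Mk n ((r : ℤ) + 1) - Mk n (r : ℤ)) * Dmat hr := by
  ext z u
  rw [Matrix.add_apply, Matrix.one_apply, Dmat_mul, mul_Dmat]
  have happ : ∀ (v : Sn n) (t : Equiv.Perm (Fin n)) (x : Fin n), (v * t) x = v (t x) :=
    fun _ _ _ => rfl
  by_cases hdesc : u (posr1 hr) < u (posr hr)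
  case neg =>
    -- u ascends at r
    have hasc : u (posr hr) < u (posr1 hr) :=
      lt_of_le_of_ne (le_of_not_gt hdesc) (u_ne_rr1 hr u)
    rw [if_neg hdesc, add_zero]
    by_cases hzu : z = u
    · subst hzu
      rw [if_pos rfl, if_pos hasc, Mk_apply, if_pos (Mcond_s hr hasc)]
    · rw [if_neg hzu]
      by_cases hzasc : z (posr hr) < z (posr1 hr)
      · rw [if_pos hzasc, Mk_apply, if_neg]
        rintro ⟨a, b, ha, hb, heq, hlen⟩
        by_cases hab' : a = posr hr ∧ b = posr1 hr
        · obtain ⟨rfl, rfl⟩ := hab'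
          rw [← srefl_eq] at heq
          exact hzu (by
            have h3 : z * simpleRefl n r hr * simpleRefl n r hr
                = u * simpleRefl n r hr * simpleRefl n r hr := by rw [heq]
            rwa [mul_s_s, mul_s_s] at h3)
        · have hab : a < b := ab_lt ha hb
          have hlen' : len (u * Equiv.swap a b) = len u + 1 := by rw [← heq]; exact hlen
          obtain ⟨hc1, hc2⟩ := cover_fwd u hab hlen'
          have hco := core hr hab hasc hab' hc1 hc2
          rw [← heq] at hco
          have e1 : (z * simpleRefl n r hr) (posr hr) = z (posr1 hr) := by
            rw [happ, s_posr]
          have e2 : (z * simpleRefl n r hr) (posr1 hr) = z (posr hr) := by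
            rw [happ, s_posr1]
          rw [e1, e2] at hco
          exact absurd (lt_trans hco hzasc) (lt_irrefl _)
      · rw [if_neg hzasc]
  case pos =>
    rw [if_pos hdesc]
    set u' := u * simpleRefl n r hr with hu'
    have husu : u' * simpleRefl n r hr = u := by rw [hu', mul_s_s]
    have hlenu : len u = len u' + 1 := len_s_pred hr u hdesc
    have hasc' : u' (posr hr) < u' (posr1 hr) := by
      have e1 : u' (posr hr) = u (posr1 hr) := by rw [hu', happ, s_posr]
      have e2 : u' (posr1 hr) = u (posr hr) := by rw [hu', happ, s_posr1]
      rw [e1, e2]; exact hdesc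
    rw [Matrix.sub_apply, Matrix.add_apply]
    by_cases hzu : z = u
    · subst hzu
      have hzdesc : ¬ z (posr hr) < z (posr1 hr) := not_lt_of_gt hdesc
      rw [if_neg hzdesc, if_pos rfl]
      have hMr : Mk n (r : ℤ) z u' = 1 := by
        rw [Mk_apply, if_pos]
        refine ⟨posr hr, posr1 hr, by simp, by simp, ?_, hlenu⟩
        rw [← srefl_eq]
        exact husu.symm
      have hswap_eq : ∀ (j : ℤ), Mcond j z u' → ∃ a b : Fin n,
          ((a:ℕ):ℤ) ≤ j ∧ j < ((b:ℕ):ℤ) ∧ Equiv.swap a b = simpleRefl n r hr := by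
        rintro j ⟨a, b, ha, hb, heq, _⟩
        refine ⟨a, b, ha, hb, ?_⟩
        have h3 : u' * simpleRefl n r hr = u' * Equiv.swap a b := by rw [husu, heq]
        exact (mul_left_cancel h3).symm
      have hMr1 : Mk n ((r : ℤ) - 1) z u' = 0 := by
        rw [Mk_apply, if_neg]
        intro hm
        obtain ⟨a, b, ha, hb, hsw⟩ := hswap_eq _ hm
        rw [srefl_eq] at hsw
        rcases swap_unique (ab_lt ha hb).ne hsw with ⟨rfl, rfl⟩ | ⟨rfl, rfl⟩ <;>
          simp only [val_posr, val_posr1] at ha hb <;> omega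
      have hMr2 : Mk n ((r : ℤ) + 1) z u' = 0 := by
        rw [Mk_apply, if_neg]
        intro hm
        obtain ⟨a, b, ha, hb, hsw⟩ := hswap_eq _ hm
        rw [srefl_eq] at hsw
        rcases swap_unique (ab_lt ha hb).ne hsw with ⟨rfl, rfl⟩ | ⟨rfl, rfl⟩ <;>
          simp only [val_posr, val_posr1] at ha hb <;> omega
      rw [hMr, hMr1, hMr2]
      ring
    · rw [if_neg hzu]
      by_cases hrep : ∃ p q : Fin n, p < q ∧ z = u' * Equiv.swap p q ∧ len z = len u' + 1
      · obtain ⟨p, q, hpq, heqz, hlenz⟩ := hrep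
        have hPQ : (p : ℕ) < (q : ℕ) := hpq
        rw [Mk_entry_of_rep _ hpq heqz hlenz, Mk_entry_of_rep _ hpq heqz hlenz,
          Mk_entry_of_rep _ hpq heqz hlenz, Mk_apply]
        rw [← ite_and]
        obtain ⟨hc1, hc2⟩ := cover_fwd u' hpq (by rw [← heqz]; exact hlenz)
        have hzs : z * simpleRefl n r hr =
            u * Equiv.swap (simpleRefl n r hr p) (simpleRefl n r hr q) := by
          rw [zs_rep hr heqz, husu]
        by_cases hgood : (q:ℕ) = r ∨ (p:ℕ) = r + 1 ∨ ((p:ℕ) < r ∧ r + 1 < (q:ℕ))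
        · -- LHS = 1
          have hmain : z (posr hr) < z (posr1 hr) ∧
              Mcond (r : ℤ) (z * simpleRefl n r hr) u := by
            rcases hgood with hg | hg | hg
            · -- case (q:ℕ) = r
              have hq : q = posr hr := eq_posr hr hg
              have hpne1 : p ≠ posr hr := ne_posr hr (by omega)
              have hpne2 : p ≠ posr1 hr := ne_posr1 hr (by omega)
              have hzpr : z (posr hr) = u' p := by
                rw [heqz, happ, ← hq, Equiv.swap_apply_right]
              have hzpr1 : z (posr1 hr) = u' (posr1 hr) := by
                rw [heqz, happ, Equiv.swap_apply_of_ne_of_ne (Ne.symm hpne2)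
                  (by rw [hq]; exact (posr_ne hr).symm)]
              have hzasc : z (posr hr) < z (posr1 hr) := by
                rw [hzpr, hzpr1]
                rw [hq] at hc1
                exact lt_trans hc1 hasc'
              have hsp : simpleRefl n r hr p = p := s_other hr hpne1 hpne2
              refine ⟨hzasc, p, posr1 hr, by omega, by simp only [val_posr1]; push_cast; omega,
                ?_, ?_⟩
              · rw [hzs, hsp, hq, s_posr]
              · have h1 : len (z * simpleRefl n r hr) = len z + 1 := len_s_succ hr z hzasc
                omega
            · -- case (p:ℕ) = r + 1
              have hp : p = posr1 hr := eq_posr1 hr hg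
              have hQ2 : (q:ℕ) ≥ r + 2 := by omega
              have hqne1 : q ≠ posr hr := ne_posr hr (by omega)
              have hqne2 : q ≠ posr1 hr := ne_posr1 hr (by omega)
              have hzpr : z (posr hr) = u' (posr hr) := by
                rw [heqz, happ, Equiv.swap_apply_of_ne_of_ne
                  (by rw [hp]; exact posr_ne hr) (Ne.symm hqne1)]
              have hzpr1 : z (posr1 hr) = u' q := by
                rw [heqz, happ, ← hp, Equiv.swap_apply_left]
              have hzasc : z (posr hr) < z (posr1 hr) := by
                rw [hzpr, hzpr1]
                rw [hp] at hc1
                exact lt_trans hasc' hc1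
              refine ⟨hzasc, posr hr, q, by simp only [val_posr]; omega,
                by push_cast; omega, ?_, ?_⟩
              · rw [hzs, hp, s_posr1, s_other hr hqne1 hqne2]
              · have h1 : len (z * simpleRefl n r hr) = len z + 1 := len_s_succ hr z hzasc
                omega
            · -- case p < r < r+1 < q
              have hpne1 : p ≠ posr hr := ne_posr hr (by omega)
              have hpne2 : p ≠ posr1 hr := ne_posr1 hr (by omega)
              have hqne1 : q ≠ posr hr := ne_posr hr (by omega)
              have hqne2 : q ≠ posr1 hr := ne_posr1 hr (by omega)
              have hzpr : z (posr hr) = u' (posr hr) := by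
                rw [heqz, happ, Equiv.swap_apply_of_ne_of_ne (Ne.symm hpne1) (Ne.symm hqne1)]
              have hzpr1 : z (posr1 hr) = u' (posr1 hr) := by
                rw [heqz, happ, Equiv.swap_apply_of_ne_of_ne (Ne.symm hpne2) (Ne.symm hqne2)]
              have hzasc : z (posr hr) < z (posr1 hr) := by
                rw [hzpr, hzpr1]; exact hasc'
              refine ⟨hzasc, p, q, by push_cast; omega, by push_cast; omega, ?_, ?_⟩
              · rw [hzs, s_other hr hpne1 hpne2, s_other hr hqne1 hqne2]
              · have h1 : len (z * simpleRefl n r hr) = len z + 1 := len_s_succ hr z hzasc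
                omega
          rw [if_pos hmain]
          split_ifs <;> omega
        · -- LHS = 0
          have hnm : ¬ Mcond (r : ℤ) (z * simpleRefl n r hr) u := by
            rintro ⟨a, b, ha, hb, heqab, hlenab⟩
            have hcase : ((q:ℕ) < r) ∨ ((q:ℕ) = r+1 ∧ (p:ℕ) < r) ∨
                ((p:ℕ) = r ∧ (q:ℕ) = r+1) ∨ ((p:ℕ) = r ∧ (q:ℕ) ≥ r+2) ∨ ((p:ℕ) ≥ r+2) := by
              simp only [not_or, not_and_or, not_lt] at hgood
              omega
            have hswab : Equiv.swap a b =
                Equiv.swap (simpleRefl n r hr p) (simpleRefl n r hr q) := by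
              have h3 : u * Equiv.swap a b =
                  u * Equiv.swap (simpleRefl n r hr p) (simpleRefl n r hr q) := by
                rw [← heqab, hzs]
              exact mul_left_cancel h3
            have habne : a ≠ b := (ab_lt ha hb).ne
            have hvals := swap_unique habne hswab
            rcases hcase with hcs | hcs | hcs | hcs | hcs
            · -- q < r : both p,q fixed by s
              have h1 : simpleRefl n r hr p = p :=
                s_other hr (ne_posr hr (by omega)) (ne_posr1 hr (by omega))
              have h2 : simpleRefl n r hr q = q :=
                s_other hr (ne_posr hr (by omega)) (ne_posr1 hr (by omega))
              rw [h1, h2] at hvals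
              rcases hvals with ⟨ha', hb'⟩ | ⟨ha', hb'⟩ <;> rw [ha'] at ha <;> rw [hb'] at hb <;>
                push_cast at ha hb <;> omega
            · -- q = r+1, p < r : pair becomes (p, posr)
              have h1 : simpleRefl n r hr p = p :=
                s_other hr (ne_posr hr (by omega)) (ne_posr1 hr (by omega))
              have h2 : simpleRefl n r hr q = posr hr := by
                rw [eq_posr1 hr hcs.1, s_posr1]
              rw [h1, h2] at hvals
              rcases hvals with ⟨ha', hb'⟩ | ⟨ha', hb'⟩ <;> rw [ha'] at ha <;> rw [hb'] at hb <;>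
                simp only [val_posr] at ha hb <;> push_cast at ha hb <;> omega
            · -- p = r, q = r+1 : z = u, contradiction
              apply hzu
              rw [heqz, eq_posr hr hcs.1, eq_posr1 hr hcs.2, ← srefl_eq, husu]
            · -- p = r, q ≥ r+2 : pair becomes (posr1, q)
              have h1 : simpleRefl n r hr p = posr1 hr := by
                rw [eq_posr hr hcs.1, s_posr]
              have h2 : simpleRefl n r hr q = q :=
                s_other hr (ne_posr hr (by omega)) (ne_posr1 hr (by omega))
              rw [h1, h2] at hvals
              rcases hvals with ⟨ha', hb'⟩ | ⟨ha', hb'⟩ <;> rw [ha'] at ha <;> rw [hb'] at hb <;>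
                simp only [val_posr1] at ha hb <;> push_cast at ha hb <;> omega
            · -- p ≥ r+2 : both fixed
              have h1 : simpleRefl n r hr p = p :=
                s_other hr (ne_posr hr (by omega)) (ne_posr1 hr (by omega))
              have h2 : simpleRefl n r hr q = q :=
                s_other hr (ne_posr hr (by omega)) (ne_posr1 hr (by omega))
              rw [h1, h2] at hvals
              rcases hvals with ⟨ha', hb'⟩ | ⟨ha', hb'⟩ <;> rw [ha'] at ha <;> rw [hb'] at hb <;>
                push_cast at ha hb <;> omega
          rw [if_neg (fun hc => hnm hc.2)]
          have hnotrr1 : ¬((p:ℕ) = r ∧ (q:ℕ) = r + 1) := by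
            rintro ⟨h1, h2⟩
            exact hzu (by rw [heqz, eq_posr hr h1, eq_posr1 hr h2, ← srefl_eq, husu])
          simp only [not_or, not_and_or, not_lt] at hgood
          split_ifs <;> omega
      · -- no representation : RHS = 0
        rw [Mk_entry_zero _ hrep, Mk_entry_zero _ hrep, Mk_entry_zero _ hrep]
        have hLHS : ¬ (z (posr hr) < z (posr1 hr) ∧ Mcond (r:ℤ) (z * simpleRefl n r hr) u) := by
          rintro ⟨hzasc, a, b, ha, hb, heq, hlen⟩
          have hlz : len z = len u' + 1 := by
            have h1 : len (z * simpleRefl n r hr) = len z + 1 := len_s_succ hr z hzasc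
            omega
          by_cases hab' : a = posr hr ∧ b = posr1 hr
          · obtain ⟨rfl, rfl⟩ := hab'
            rw [← srefl_eq] at heq
            apply hzu
            have h3 : z * simpleRefl n r hr * simpleRefl n r hr
                = u * simpleRefl n r hr * simpleRefl n r hr := by rw [heq]
            rwa [mul_s_s, mul_s_s] at h3
          · apply hrep
            have hzeq : z = u' * Equiv.swap (simpleRefl n r hr a) (simpleRefl n r hr b) := by
              have h3 : z * simpleRefl n r hr * simpleRefl n r hr
                  = u * Equiv.swap a b * simpleRefl n r hr := by rw [heq]
              rw [mul_s_s, conj_swap] at h3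
              rw [h3, hu']
            have hsort : simpleRefl n r hr a < simpleRefl n r hr b := by
              rw [Fin.lt_def]
              have hav : ((a:ℕ) = r ∨ (a:ℕ) < r) := by
                have h1 : ((a:ℕ):ℤ) ≤ (r:ℤ) := ha
                rcases eq_or_lt_of_le h1 with h' | h'
                · left; exact_mod_cast h'
                · right; exact_mod_cast h'
              rcases hav with hav | hav
              · have hae : a = posr hr := eq_posr hr hav
                have hbne : b ≠ posr1 hr := fun hc => hab' ⟨hae, hc⟩
                have hbv : (b : ℕ) ≥ r + 2 := by
                  have h1 : r < (b : ℕ) := by exact_mod_cast hb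
                  have h2 : (b : ℕ) ≠ r + 1 := fun hc => hbne (eq_posr1 hr hc)
                  omega
                rw [hae, s_posr, s_other hr (ne_posr hr (by omega)) (ne_posr1 hr (by omega))]
                simp only [val_posr1]; omega
              · have hsa : simpleRefl n r hr a = a :=
                  s_other hr (ne_posr hr (by omega)) (ne_posr1 hr (by omega))
                rcases eq_or_ne (b:ℕ) (r+1) with hbv | hbv
                · rw [hsa, eq_posr1 hr hbv, s_posr1]
                  simp only [val_posr]; omega
                · have hbv2 : (b:ℕ) ≥ r + 2 := by
                    have h1 : r < (b : ℕ) := by exact_mod_cast hb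
                    omega
                  rw [hsa, s_other hr (ne_posr hr (by omega)) (ne_posr1 hr (by omega))]
                  omega
            exact ⟨_, _, hsort, hzeq, hlz⟩
        by_cases hzasc : z (posr hr) < z (posr1 hr)
        · rw [if_pos hzasc, Mk_apply, if_neg (fun hm => hLHS ⟨hzasc, hm⟩)]
          ring
        · rw [if_neg hzasc]
          ring


/-! ### Spanning: every basis vector is generated from `e₁` by Monk matrices -/

/-- reverse-lexicographic comparison: `y` beats `x` at the rightmost difference. -/
def RL (x y : Sn n) : Prop := ∃ k : Fin n, x k < y k ∧ ∀ m, k < m → x m = y m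

lemma RL_trans {x y z : Sn n} (h1 : RL x y) (h2 : RL y z) : RL x z := by
  obtain ⟨k1, hk1, hm1⟩ := h1
  obtain ⟨k2, hk2, hm2⟩ := h2
  rcases lt_trichotomy k1 k2 with h | h | h
  · exact ⟨k2, by rw [hm1 k2 h]; exact hk2, fun m hm => by rw [hm1 m (lt_trans h hm), hm2 m hm]⟩
  · subst h
    exact ⟨k1, lt_trans hk1 hk2, fun m hm => by rw [hm1 m hm, hm2 m hm]⟩
  · exact ⟨k1, by rw [← hm2 k1 h]; exact hk1, fun m hm => by rw [hm1 m hm, hm2 m (lt_trans h hm)]⟩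

lemma RL_irrefl (x : Sn n) : ¬ RL x x := by
  rintro ⟨k, hk, -⟩
  exact lt_irrefl _ hk

open Classical in
noncomputable def rlCard (w : Sn n) : ℕ := (Finset.univ.filter (fun y => RL w y)).card

noncomputable def mu (w : Sn n) : ℕ := len w * (Fintype.card (Sn n) + 1) + rlCard w

lemma rlCard_le (w : Sn n) : rlCard w ≤ Fintype.card (Sn n) := by
  classical
  exact le_trans (Finset.card_filter_le _ _) (le_of_eq (Finset.card_univ))

lemma mu_lt_of_len_lt {v w : Sn n} (h : len v < len w) : mu v < mu w := by
  have h1 := rlCard_le v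
  have h2 := rlCard_le w
  rw [mu, mu]
  have : (len v + 1) * (Fintype.card (Sn n) + 1) ≤ len w * (Fintype.card (Sn n) + 1) :=
    Nat.mul_le_mul_right _ h
  nlinarith [Nat.mul_le_mul_right (Fintype.card (Sn n) + 1) h]

lemma mu_lt_of_RL {x w : Sn n} (hl : len x = len w) (hrl : RL w x) : mu x < mu w := by
  classical
  rw [mu, mu, hl]
  have hsub : (Finset.univ.filter (fun y => RL x y)) ⊂ (Finset.univ.filter (fun y => RL w y)) := by
    rw [Finset.ssubset_iff_of_subset]
    · exact ⟨x, by simp [hrl], by simp [RL_irrefl]⟩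
    · intro y hy
      simp only [Finset.mem_filter, Finset.mem_univ, true_and] at hy ⊢
      exact RL_trans hrl hy
  have := Finset.card_lt_card hsub
  rw [rlCard, rlCard]
  omega

lemma chain_mono (w : Sn n) (lo : ℕ)
    (h : ∀ k, lo ≤ k → ∀ (hk2 : k + 1 < n), w ⟨k, by omega⟩ < w ⟨k + 1, hk2⟩) :
    ∀ c m : Fin n, lo ≤ (c : ℕ) → c < m → w c < w m := by
  have key : ∀ (d c : ℕ) (hc : lo ≤ c) (hd : c + d + 1 < n),
      w ⟨c, by omega⟩ < w ⟨c + d + 1, hd⟩ := by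
    intro d
    induction d with
    | zero =>
      intro c hc hd
      exact h c hc (by omega)
    | succ d IH =>
      intro c hc hd
      have h1 := IH c hc (by omega)
      have h2 := h (c + d + 1) (by omega) (by omega)
      exact lt_trans h1 h2
  intro c m hc hcm
  have hlt : (c : ℕ) < (m : ℕ) := hcm
  have h1 := key ((m : ℕ) - (c : ℕ) - 1) (c : ℕ) hc (by omega)
  have h2 : (⟨(c : ℕ) + ((m : ℕ) - (c : ℕ) - 1) + 1, by omega⟩ : Fin n) = m :=
    Fin.ext (by simp; omega)
  rw [h2] at h1
  have h3 : (⟨(c : ℕ), by omega⟩ : Fin n) = c := Fin.ext rfl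
  rw [h3] at h1
  exact h1

lemma eq_one_of_no_descent (w : Sn n)
    (h : ∀ k, ∀ (hk2 : k + 1 < n), w ⟨k, by omega⟩ < w ⟨k + 1, hk2⟩) : w = 1 := by
  have hmono : StrictMono w := by
    intro a b hab
    exact chain_mono w 0 (fun k _ hk2 => h k hk2) a b (Nat.zero_le _) hab
  have hid : StrictMono (id : Fin n → Fin n) := strictMono_id
  have hrange : Set.range w = Set.range (id : Fin n → Fin n) := by
    rw [Set.range_id, Set.range_eq_univ.mpr w.surjective]
  have heq : (w : Fin n → Fin n) = id := (hmono.range_inj hid).1 hrange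
  exact Equiv.ext (fun x => congrFun heq x)

noncomputable def wordVec (n : ℕ) (l : List ℤ) : Sn n → ℤ :=
  l.foldr (fun j acc => Mk n j *ᵥ acc) (Pi.single 1 1)

def Wspan (n : ℕ) : Submodule ℤ (Sn n → ℤ) :=
  Submodule.span ℤ {v | ∃ l : List ℤ, v = wordVec n l}

lemma wordVec_mem (l : List ℤ) : wordVec n l ∈ Wspan n :=
  Submodule.subset_span ⟨l, rfl⟩

lemma Wspan_mulVec (j : ℤ) {v : Sn n → ℤ} (hv : v ∈ Wspan n) : Mk n j *ᵥ v ∈ Wspan n := by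
  induction hv using Submodule.span_induction with
  | mem x hx =>
    obtain ⟨l, rfl⟩ := hx
    exact wordVec_mem (j :: l)
  | zero => rw [Matrix.mulVec_zero]; exact Submodule.zero_mem _
  | add x y _ _ hx hy => rw [Matrix.mulVec_add]; exact Submodule.add_mem _ hx hy
  | smul a x _ hx => rw [Matrix.mulVec_smul]; exact Submodule.smul_mem _ _ hx


lemma mulVec_single_apply (M : Matrix (Sn n) (Sn n) ℤ) (v z : Sn n) :
    (M *ᵥ Pi.single v 1) z = M z v := by
  classical
  show Finset.sum _ _ = _
  rw [Finset.sum_eq_single v]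
  · rw [Pi.single_eq_same, mul_one]
  · intro x _ hx; rw [Pi.single_eq_of_ne hx, mul_zero]
  · intro h; exact absurd (Finset.mem_univ _) h

lemma sum_single_apply (C : Finset (Sn n)) (z : Sn n) :
    (∑ x ∈ C, Pi.single x (1 : ℤ)) z = if z ∈ C then 1 else 0 := by
  classical
  rw [Finset.sum_apply]
  simp_rw [Pi.single_apply]
  rw [Finset.sum_ite_eq]

open Classical in
lemma transition (w : Sn n) (hw : w ≠ 1) :
    ∃ (j : ℕ) (v : Sn n) (C : Finset (Sn n)),
      len v < len w ∧ (∀ x ∈ C, len x = len w ∧ RL w x) ∧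
      Pi.single w (1 : ℤ) = (Mk n (j : ℤ) - Mk n ((j : ℤ) - 1)) *ᵥ Pi.single v 1 +
        ∑ x ∈ C, Pi.single x 1 := by
  classical
  set Dset := Finset.univ.filter
    (fun k : Fin n => ∃ m : Fin n, (m : ℕ) = (k : ℕ) + 1 ∧ w m < w k) with hD
  have hDne : Dset.Nonempty := by
    by_contra hne
    rw [Finset.not_nonempty_iff_eq_empty] at hne
    apply hw
    apply eq_one_of_no_descent
    intro k hk2
    by_contra hlt
    have hmem : (⟨k, by omega⟩ : Fin n) ∈ Dset := by
      rw [hD, Finset.mem_filter]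
      refine ⟨Finset.mem_univ _, ⟨⟨k + 1, hk2⟩, rfl, ?_⟩⟩
      have hne2 : w ⟨k, by omega⟩ ≠ w ⟨k + 1, hk2⟩ := val_ne w (by simp [Fin.ext_iff])
      exact lt_of_le_of_ne (le_of_not_gt hlt) (Ne.symm hne2)
    rw [hne] at hmem
    exact absurd hmem (Finset.notMem_empty _)
  have hDmem' : ∀ k : Fin n, (∃ m : Fin n, (m : ℕ) = (k : ℕ) + 1 ∧ w m < w k) → k ∈ Dset := by
    intro k hk
    rw [hD, Finset.mem_filter]
    exact ⟨Finset.mem_univ _, hk⟩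
  set jf := Dset.max' hDne with hjf
  have hDmem : ∀ k, k ∈ Dset → ∃ m : Fin n, (m : ℕ) = (k : ℕ) + 1 ∧ w m < w k := by
    intro k hk
    rw [hD, Finset.mem_filter] at hk
    exact hk.2
  obtain ⟨jf1, hjf1v, hjfdesc⟩ := hDmem jf (Dset.max'_mem hDne)
  have hF1 : ∀ k, (jf : ℕ) + 1 ≤ k → ∀ (hk2 : k + 1 < n),
      w ⟨k, by omega⟩ < w ⟨k + 1, hk2⟩ := by
    intro k hk hk2
    by_contra hlt
    have hmem : (⟨k, by omega⟩ : Fin n) ∈ Dset := by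
      refine hDmem' _ ⟨⟨k + 1, hk2⟩, rfl, ?_⟩
      have hne2 : w ⟨k, by omega⟩ ≠ w ⟨k + 1, hk2⟩ := val_ne w (by simp [Fin.ext_iff])
      exact lt_of_le_of_ne (le_of_not_gt hlt) (Ne.symm hne2)
    have hle := Finset.le_max' Dset _ hmem
    rw [← hjf] at hle
    rw [Fin.le_def] at hle
    simp at hle
    omega
  have hchain := chain_mono w ((jf : ℕ) + 1) hF1
  set B := Finset.univ.filter (fun k : Fin n => jf < k ∧ w k < w jf) with hB
  have hBne : B.Nonempty := by
    refine ⟨jf1, ?_⟩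
    rw [hB, Finset.mem_filter]
    exact ⟨Finset.mem_univ _, by rw [Fin.lt_def]; omega, hjfdesc⟩
  have hBmem' : ∀ k : Fin n, k ∈ B → (jf < k ∧ w k < w jf) := by
    intro k hk
    rw [hB, Finset.mem_filter] at hk
    exact hk.2
  set b0 := B.max' hBne with hb0
  obtain ⟨hjb0, hwb0⟩ := hBmem' b0 (B.max'_mem hBne)
  have hF2 : ∀ k : Fin n, b0 < k → w jf < w k := by
    intro k hk
    have hknot : k ∉ B := fun hmem => absurd (Finset.le_max' B _ hmem) (not_le_of_gt (hb0 ▸ hk))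
    have h2 : ¬(jf < k ∧ w k < w jf) := fun hc => hknot (by
      rw [hB, Finset.mem_filter]
      exact ⟨Finset.mem_univ _, hc⟩)
    have h3 : ¬ w k < w jf := fun hc => h2 ⟨lt_trans hjb0 hk, hc⟩
    exact lt_of_le_of_ne (le_of_not_gt h3) (val_ne w (ne_of_lt (lt_trans hjb0 hk)))
  set v := w * Equiv.swap jf b0 with hv
  have happ : ∀ (t : Equiv.Perm (Fin n)) (x : Fin n), (w * t) x = w (t x) := fun _ _ => rfl
  have hvjf : v jf = w b0 := by rw [hv, happ, Equiv.swap_apply_left]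
  have hvb0 : v b0 = w jf := by rw [hv, happ, Equiv.swap_apply_right]
  have hvother : ∀ x, x ≠ jf → x ≠ b0 → v x = w x := by
    intro x h1 h2
    rw [hv, happ, Equiv.swap_apply_of_ne_of_ne h1 h2]
  have hvw : v * Equiv.swap jf b0 = w := by
    rw [hv, mul_assoc, Equiv.swap_mul_self, mul_one]
  have hcv1 : v jf < v b0 := by rw [hvjf, hvb0]; exact hwb0
  have hcv2 : ∀ c, jf < c → c < b0 → ¬(v jf < v c ∧ v c < v b0) := by
    rintro c h1 h2 ⟨hc1, hc2⟩
    have hvc : v c = w c := hvother c (ne_of_gt h1) (ne_of_lt h2)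
    have : w c < w b0 := hchain c b0 (by rw [Fin.lt_def] at h1; omega) h2
    rw [hvc, hvjf] at hc1
    exact absurd (lt_trans hc1 this) (lt_irrefl _)
  have hlenw : len w = len v + 1 := by
    have := cover_bwd v hjb0 hcv1 hcv2
    rw [hvw] at this
    exact this
  set C := Finset.univ.filter
    (fun x : Sn n => ∃ a : Fin n, a < jf ∧ x = v * Equiv.swap a jf ∧ len x = len v + 1) with hCdef
  have hCmem : ∀ z : Sn n, z ∈ C ↔
      ∃ a : Fin n, a < jf ∧ z = v * Equiv.swap a jf ∧ len z = len v + 1 := by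
    intro z
    rw [hCdef, Finset.mem_filter]
    simp only [Finset.mem_univ, true_and]
  have hCprop : ∀ x ∈ C, len x = len w ∧ RL w x := by
    intro x hx
    obtain ⟨a, haj, hxe, hxl⟩ := (hCmem x).1 hx
    have happ2 : ∀ (y : Fin n), x y = v (Equiv.swap a jf y) := fun y => by rw [hxe]; rfl
    constructor
    · omega
    · refine ⟨b0, ?_, ?_⟩
      · have hxb0 : x b0 = w jf := by
          rw [happ2, Equiv.swap_apply_of_ne_of_ne (ne_of_gt (lt_trans haj hjb0))
            (ne_of_gt hjb0), hvb0]
        rw [hxb0]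
        exact hwb0
      · intro m hm
        have hxm : x m = w m := by
          rw [happ2, Equiv.swap_apply_of_ne_of_ne
            (ne_of_gt (lt_trans (lt_trans haj hjb0) hm)) (ne_of_gt (lt_trans hjb0 hm))]
          exact hvother m (ne_of_gt (lt_trans hjb0 hm)) (ne_of_gt hm)
        rw [hxm]
  have hT2 : ∀ q : Fin n, jf < q → len (v * Equiv.swap jf q) = len v + 1 → q = b0 := by
    intro q hq hlen
    by_contra hqb0
    obtain ⟨h1, h2⟩ := cover_fwd v hq hlen
    rcases lt_trichotomy q b0 with hlt | heq | hgt
    · have hvq : v q = w q := hvother q (ne_of_gt hq) (ne_of_lt hlt)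
      have hc : w q < w b0 := hchain q b0 (by rw [Fin.lt_def] at hq; omega) hlt
      rw [hvq] at h1
      rw [hvjf] at h1
      exact absurd (lt_trans h1 hc) (lt_irrefl _)
    · exact hqb0 heq
    · have hvq : v q = w q := hvother q (ne_of_gt hq) (ne_of_gt hgt)
      refine h2 b0 hjb0 hgt ⟨?_, ?_⟩
      · rw [hvjf, hvb0]; exact hwb0
      · rw [hvb0, hvq]; exact hF2 q hgt
  refine ⟨(jf : ℕ), v, C, by omega, hCprop, ?_⟩
  funext z
  rw [Pi.add_apply, Matrix.sub_mulVec, Pi.sub_apply, mulVec_single_apply, mulVec_single_apply,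
    sum_single_apply, Pi.single_apply]
  by_cases hrep : ∃ p q : Fin n, p < q ∧ z = v * Equiv.swap p q ∧ len z = len v + 1
  · obtain ⟨p, q, hpq, heqz, hlenz⟩ := hrep
    rw [Mk_entry_of_rep _ hpq heqz hlenz, Mk_entry_of_rep _ hpq heqz hlenz]
    have hzw_iff : z = w ↔ (p = jf ∧ q = b0) := by
      constructor
      · intro hzw
        have hmul : v * Equiv.swap p q = v * Equiv.swap jf b0 := by
          rw [← heqz, hzw, ← hvw]
        have hsw := mul_left_cancel hmul
        rcases swap_unique hpq.ne hsw with ⟨h1, h2⟩ | ⟨h1, h2⟩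
        · exact ⟨h1, h2⟩
        · rw [Fin.lt_def] at hpq hjb0
          rw [Fin.ext_iff] at h1 h2
          omega
      · rintro ⟨rfl, rfl⟩
        rw [heqz, hvw]
    have hzC_iff : z ∈ C ↔ q = jf := by
      rw [hCmem]
      constructor
      · rintro ⟨a, haj, hxe, -⟩
        have hmul : v * Equiv.swap p q = v * Equiv.swap a jf := by rw [← heqz, ← hxe]
        have hsw := mul_left_cancel hmul
        rcases swap_unique hpq.ne hsw with ⟨h1, h2⟩ | ⟨h1, h2⟩
        · exact h2
        · rw [Fin.lt_def] at hpq haj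
          rw [Fin.ext_iff] at h1 h2
          omega
      · intro hq
        exact ⟨p, hq ▸ hpq, by rw [← hq]; exact heqz, hlenz⟩
    have hPQ : (p : ℕ) < (q : ℕ) := hpq
    by_cases hq : q = jf
    · have hzC : z ∈ C := hzC_iff.2 hq
      have hzw : z ≠ w := by
        intro hzw
        have h2 := (hzw_iff.1 hzw).2
        rw [hq] at h2
        rw [Fin.lt_def] at hjb0
        rw [Fin.ext_iff] at h2
        omega
      rw [if_neg hzw, if_pos hzC]
      have hQ : (q : ℕ) = (jf : ℕ) := by rw [hq]
      split_ifs <;> omega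
    · by_cases hp : p = jf
      · have hqb0 : q = b0 := by
          apply hT2 q (hp ▸ hpq)
          rw [← hp, ← heqz]
          exact hlenz
        have hzw : z = w := hzw_iff.2 ⟨hp, hqb0⟩
        have hzC : z ∉ C := fun hc => hq (hzC_iff.1 hc)
        rw [if_pos hzw, if_neg hzC]
        have hP : (p : ℕ) = (jf : ℕ) := by rw [hp]
        split_ifs <;> omega
      · have hzw : z ≠ w := fun hzw => hp (hzw_iff.1 hzw).1
        have hzC : z ∉ C := fun hc => hq (hzC_iff.1 hc)
        rw [if_neg hzw, if_neg hzC]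
        have hP : (p : ℕ) ≠ (jf : ℕ) := fun hc => hp (Fin.ext hc)
        have hQ : (q : ℕ) ≠ (jf : ℕ) := fun hc => hq (Fin.ext hc)
        split_ifs <;> omega
  · rw [Mk_entry_zero _ hrep, Mk_entry_zero _ hrep]
    have hzw : z ≠ w := by
      intro hzw
      exact hrep ⟨jf, b0, hjb0, by rw [hzw, ← hvw], by rw [hzw]; exact hlenw⟩
    have hzC : z ∉ C := by
      intro hc
      obtain ⟨a, h1, h2, h3⟩ := (hCmem z).1 hc
      exact hrep ⟨a, jf, h1, h2, h3⟩
    rw [if_neg hzw, if_neg hzC]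
    ring

theorem single_mem_Wspan : ∀ w : Sn n, Pi.single w (1 : ℤ) ∈ Wspan n := by
  suffices H : ∀ (M : ℕ) (w : Sn n), mu w = M → Pi.single w (1 : ℤ) ∈ Wspan n by
    exact fun w => H (mu w) w rfl
  intro M
  induction M using Nat.strong_induction_on with
  | _ M IH =>
    intro w hM
    by_cases hw : w = 1
    · subst hw
      exact wordVec_mem []
    · obtain ⟨j, v, C, hlv, hC, hid⟩ := transition w hw
      rw [hid]
      apply Submodule.add_mem
      · rw [Matrix.sub_mulVec]
        apply Submodule.sub_mem
        · exact Wspan_mulVec _ (IH (mu v) (by rw [← hM]; exact mu_lt_of_len_lt hlv) v rfl)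
        · exact Wspan_mulVec _ (IH (mu v) (by rw [← hM]; exact mu_lt_of_len_lt hlv) v rfl)
      · exact Submodule.sum_mem _ (fun x hx =>
          IH (mu x) (by rw [← hM]; exact mu_lt_of_RL (hC x hx).1 (hC x hx).2) x rfl)

lemma eq_zero_of_twisted_commute (φ : Matrix (Sn n) (Sn n) ℤ) (T : ℤ → Matrix (Sn n) (Sn n) ℤ)
    (hcomm : ∀ j : ℤ, φ * Mk n j = T j * φ) (h1 : φ *ᵥ Pi.single 1 1 = 0) : φ = 0 := by
  have hword : ∀ l : List ℤ, φ *ᵥ wordVec n l = 0 := by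
    intro l
    induction l with
    | nil => exact h1
    | cons j l IH =>
      show φ *ᵥ (Mk n j *ᵥ wordVec n l) = 0
      rw [Matrix.mulVec_mulVec, hcomm j, ← Matrix.mulVec_mulVec, IH, Matrix.mulVec_zero]
  have hvec : ∀ x ∈ Wspan n, φ *ᵥ x = 0 := by
    intro x hx
    induction hx using Submodule.span_induction with
    | mem x hx => obtain ⟨l, rfl⟩ := hx; exact hword l
    | zero => exact Matrix.mulVec_zero φ
    | add x y _ _ hx hy => rw [Matrix.mulVec_add, hx, hy, add_zero]
    | smul a x _ hx => rw [Matrix.mulVec_smul, hx, smul_zero]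
  ext z u
  have hz := congrFun (hvec (Pi.single u 1) (single_mem_Wspan u)) z
  rw [mulVec_single_apply] at hz
  simpa using hz


/-! ### From the axioms to commuting matrices -/

section Algebra

variable {A : Type} [CommRing A] {σ : Sn n → A}

lemma coeff_ext (hLI : LinearIndependent ℤ σ) {c d : Sn n → ℤ}
    (h : ∑ w : Sn n, c w • σ w = ∑ w : Sn n, d w • σ w) : c = d := by
  have h2 : ∑ w : Sn n, (c - d) w • σ w = 0 := by
    simp only [Pi.sub_apply, sub_smul, Finset.sum_sub_distrib, h, sub_self]
  have h3 := Fintype.linearIndependent_iff.mp hLI (c - d) h2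
  funext w
  have h4 := h3 w
  simpa [sub_eq_zero] using h4

variable {N : Sn n → Sn n → Sn n → ℤ}

/-- the multiplication matrix of `σ_u` in the Schubert basis. -/
noncomputable def Nmat (N : Sn n → Sn n → Sn n → ℤ) (u : Sn n) : Matrix (Sn n) (Sn n) ℤ :=
  Matrix.of fun w v => N u v w

lemma sum_single_smul (u : Sn n) (f : Sn n → A) :
    ∑ w : Sn n, (Pi.single u 1 : Sn n → ℤ) w • f w = f u := by
  classical
  rw [Finset.sum_eq_single u]
  · rw [Pi.single_eq_same, one_smul]
  · intro w _ hw; rw [Pi.single_eq_of_ne hw, zero_smul]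
  · intro h; exact absurd (Finset.mem_univ _) h

lemma N_one (hLI : LinearIndependent ℤ σ) (hone : σ 1 = 1)
    (hprod : ∀ u v : Sn n, σ u * σ v = ∑ w : Sn n, N u v w • σ w) (u : Sn n) :
    (fun w => N u 1 w) = Pi.single u 1 := by
  apply coeff_ext hLI
  rw [← hprod u 1, hone, mul_one]
  rw [sum_single_smul u σ]

lemma Nmat_mulVec_single (hLI : LinearIndependent ℤ σ) (hone : σ 1 = 1)
    (hprod : ∀ u v : Sn n, σ u * σ v = ∑ w : Sn n, N u v w • σ w) (u : Sn n) :
    Nmat N u *ᵥ Pi.single 1 1 = Pi.single u 1 := by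
  funext z
  rw [mulVec_single_apply]
  exact congrFun (N_one hLI hone hprod u) z

lemma triple_prod (hprod : ∀ u v : Sn n, σ u * σ v = ∑ w : Sn n, N u v w • σ w)
    (u v x : Sn n) :
    σ u * (σ v * σ x) = ∑ w : Sn n, (∑ y : Sn n, N v x y * N u y w) • σ w := by
  rw [hprod v x, Finset.mul_sum]
  have h1 : ∀ y : Sn n, σ u * (N v x y • σ y) = ∑ w : Sn n, (N v x y * N u y w) • σ w := by
    intro y
    rw [mul_smul_comm, hprod u y, Finset.smul_sum]
    congr 1
    funext w
    rw [smul_smul]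
  rw [Finset.sum_congr rfl (fun y _ => h1 y), Finset.sum_comm]
  congr 1
  funext w
  rw [Finset.sum_smul]

lemma Nmat_comm (hLI : LinearIndependent ℤ σ)
    (hprod : ∀ u v : Sn n, σ u * σ v = ∑ w : Sn n, N u v w • σ w) (u v : Sn n) :
    Nmat N u * Nmat N v = Nmat N v * Nmat N u := by
  ext w x
  have h1 := triple_prod hprod u v x
  have h2 := triple_prod hprod v u x
  have h3 : σ u * (σ v * σ x) = σ v * (σ u * σ x) := by ring
  rw [h3, h2] at h1
  have h4 := coeff_ext hLI h1
  have h5 := congrFun h4 w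
  simp only [Matrix.mul_apply, Nmat, Matrix.of_apply]
  calc ∑ y : Sn n, N u y w * N v x y
      = ∑ y : Sn n, N v x y * N u y w := by
        congr 1; funext y; ring
    _ = ∑ y : Sn n, N u x y * N v y w := h5.symm
    _ = ∑ y : Sn n, N v y w * N u x y := by
        congr 1; funext y; ring

open Classical in
lemma Nmat_srefl (hLI : LinearIndependent ℤ σ)
    (hprod : ∀ u v : Sn n, σ u * σ v = ∑ w : Sn n, N u v w • σ w)
    (hmonk : ∀ (r : ℕ) (h : r + 1 < n) (u : Sn n),
      σ (simpleRefl n r h) * σ u =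
        ∑ w : Sn n, (if ∃ a b : Fin n, a.val ≤ r ∧ r < b.val ∧
            w = u * Equiv.swap a b ∧ len w = len u + 1 then (1 : ℤ) else 0) • σ w)
    {r : ℕ} (hr : r + 1 < n) :
    Nmat N (simpleRefl n r hr) = Mk n (r : ℤ) := by
  ext w u
  have h1 : (fun w => N (simpleRefl n r hr) u w) =
      (fun w => if ∃ a b : Fin n, a.val ≤ r ∧ r < b.val ∧
          w = u * Equiv.swap a b ∧ len w = len u + 1 then (1 : ℤ) else 0) := by
    apply coeff_ext hLI
    rw [← hprod, hmonk r hr u]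
  have h2 := congrFun h1 w
  show N (simpleRefl n r hr) u w = _
  rw [h2, Mk_apply]
  have hiff : (∃ a b : Fin n, a.val ≤ r ∧ r < b.val ∧
      w = u * Equiv.swap a b ∧ len w = len u + 1) ↔ Mcond (r : ℤ) w u := by
    constructor
    · rintro ⟨a, b, h1', h2', h3', h4'⟩
      exact ⟨a, b, by exact_mod_cast h1', by exact_mod_cast h2', h3', h4'⟩
    · rintro ⟨a, b, h1', h2', h3', h4'⟩
      exact ⟨a, b, by exact_mod_cast h1', by exact_mod_cast h2', h3', h4'⟩
  by_cases h : Mcond (r : ℤ) w u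
  · rw [if_pos h, if_pos (hiff.2 h)]
  · rw [if_neg h, if_neg (fun hc => h (hiff.1 hc))]

lemma Mk_out_of_range {j : ℤ} (hj : j < 0 ∨ (n : ℤ) - 1 ≤ j) : Mk n j = 0 := by
  ext w u
  rw [Mk_apply, if_neg]
  · rfl
  · rintro ⟨a, b, ha, hb, -, -⟩
    have ha0 : (0 : ℤ) ≤ (a.val : ℤ) := by positivity
    have hbn : (b.val : ℤ) < (n : ℤ) := by exact_mod_cast b.isLt
    omega

lemma Nmat_commute_Mk (hLI : LinearIndependent ℤ σ)
    (hprod : ∀ u v : Sn n, σ u * σ v = ∑ w : Sn n, N u v w • σ w)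
    (hmonk : ∀ (r : ℕ) (h : r + 1 < n) (u : Sn n),
      σ (simpleRefl n r h) * σ u =
        ∑ w : Sn n, (if ∃ a b : Fin n, a.val ≤ r ∧ r < b.val ∧
            w = u * Equiv.swap a b ∧ len w = len u + 1 then (1 : ℤ) else 0) • σ w)
    (u : Sn n) (j : ℤ) : Commute (Nmat N u) (Mk n j) := by
  by_cases hj : j < 0 ∨ (n : ℤ) - 1 ≤ j
  · rw [Mk_out_of_range hj]
    exact Commute.zero_right _
  · push_neg at hj
    obtain ⟨hj0, hjn⟩ := hj
    set r := j.toNat with hrdef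
    have hjr : j = (r : ℤ) := by omega
    have hr : r + 1 < n := by omega
    rw [hjr, ← Nmat_srefl hLI hprod hmonk hr]
    exact Nmat_comm hLI hprod u (simpleRefl n r hr)

lemma Mk_commute_Mk (hLI : LinearIndependent ℤ σ)
    (hprod : ∀ u v : Sn n, σ u * σ v = ∑ w : Sn n, N u v w • σ w)
    (hmonk : ∀ (r : ℕ) (h : r + 1 < n) (u : Sn n),
      σ (simpleRefl n r h) * σ u =
        ∑ w : Sn n, (if ∃ a b : Fin n, a.val ≤ r ∧ r < b.val ∧
            w = u * Equiv.swap a b ∧ len w = len u + 1 then (1 : ℤ) else 0) • σ w)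
    (j k : ℤ) : Commute (Mk n j) (Mk n k) := by
  by_cases hj : j < 0 ∨ (n : ℤ) - 1 ≤ j
  · rw [Mk_out_of_range hj]
    exact Commute.zero_left _
  · push_neg at hj
    set r := j.toNat with hrdef
    have hjr : j = (r : ℤ) := by omega
    have hr : r + 1 < n := by omega
    rw [hjr, ← Nmat_srefl hLI hprod hmonk hr]
    exact Nmat_commute_Mk hLI hprod hmonk _ k

end Algebra


/-! ### The divided-difference operator identity -/

noncomputable def Bp (n : ℕ) (r : ℕ) : Matrix (Sn n) (Sn n) ℤ :=
  Mk n (r : ℤ) + Mk n (r : ℤ) - Mk n ((r : ℤ) - 1) - Mk n ((r : ℤ) + 1)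

noncomputable def Tr (n : ℕ) (r : ℕ) : Matrix (Sn n) (Sn n) ℤ :=
  Mk n ((r : ℤ) - 1) + Mk n ((r : ℤ) + 1) - Mk n (r : ℤ)

lemma Dmat_e1 (hr : r + 1 < n) : Dmat hr *ᵥ Pi.single 1 1 = (0 : Sn n → ℤ) := by
  funext z
  rw [mulVec_single_apply, Dmat_apply]
  rw [if_neg]
  · rfl
  · rintro ⟨h1, -⟩
    simp only [Equiv.Perm.one_apply] at h1
    rw [Fin.lt_def] at h1
    simp at h1

open Classical in
lemma Dmat_mulVec_single (hr : r + 1 < n) (u : Sn n) :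
    Dmat hr *ᵥ Pi.single u 1 =
      if u (posr1 hr) < u (posr hr) then Pi.single (u * simpleRefl n r hr) (1 : ℤ) else 0 := by
  funext z
  rw [mulVec_single_apply, Dmat_apply, ite_and]
  by_cases h1 : u (posr1 hr) < u (posr hr)
  · rw [if_pos h1, if_pos h1]
    by_cases h2 : z = u * simpleRefl n r hr
    · rw [if_pos h2, h2, Pi.single_eq_same]
    · rw [if_neg h2, Pi.single_eq_of_ne h2]
  · rw [if_neg h1, if_neg h1]
    rfl

open Classical in
lemma OpId (hr : r + 1 < n)
    (hMM : ∀ j k : ℤ, Commute (Mk n j) (Mk n k))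
    {Amat A' : Matrix (Sn n) (Sn n) ℤ}
    (hA : ∀ j : ℤ, Commute Amat (Mk n j)) (hA' : ∀ j : ℤ, Commute A' (Mk n j))
    (hinit : Dmat hr *ᵥ (Amat *ᵥ Pi.single 1 1) = A' *ᵥ Pi.single 1 1) :
    Dmat hr * Amat = A' + (Amat - A' * Bp n r) * Dmat hr := by
  set D := Dmat hr with hD
  set E := Amat - A' * Bp n r with hE
  set φ := D * Amat - A' - E * D with hφ
  have hBpC : ∀ j : ℤ, Commute (Bp n r) (Mk n j) := by
    intro j
    exact (((hMM _ j).add_left (hMM _ j)).sub_left (hMM _ j)).sub_left (hMM _ j)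
  have hTrC : ∀ j : ℤ, Commute (Tr n r) (Mk n j) := by
    intro j
    exact ((hMM _ j).add_left (hMM _ j)).sub_left (hMM _ j)
  have hEC : ∀ j : ℤ, Commute E (Mk n j) := by
    intro j
    exact (hA j).sub_left ((hA' j).mul_left (hBpC j))
  have hφz : φ = 0 := by
    apply eq_zero_of_twisted_commute φ (fun j => if j = (r : ℤ) then Tr n r else Mk n j)
    · intro j
      by_cases hj : j = (r : ℤ)
      · subst hj
        rw [if_pos rfl]
        set M := Mk n ((r : ℕ) : ℤ) with hM
        set T := Tr n r with hT
        have hDM : D * M = 1 + T * D := CI2 hr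
        have e1 : D * Amat * M = Amat + T * (D * Amat) := by
          rw [mul_assoc D Amat M, (hA _).eq, ← mul_assoc, hDM, add_mul, one_mul, mul_assoc]
        have hET : Commute E T := by
          have := hEC
          exact ((this _).add_right (this _)).sub_right (this _)
        have e2 : E * D * M = E + T * (E * D) := by
          rw [mul_assoc E D M, hDM, mul_add, mul_one, ← mul_assoc E T D, hET.eq, mul_assoc]
        have hA'T : Commute A' T := by
          exact ((hA' _).add_right (hA' _)).sub_right (hA' _)
        have e3 : A' * Bp n r - A' * M = -(T * A') := by
          rw [← mul_sub]
          have h4 : Bp n r - M = -T := by rw [hT, Tr, hM, Bp]; abel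
          rw [h4, mul_neg, hA'T.eq]
        have h4 : Amat - E = A' * Bp n r := by rw [hE]; abel
        have h5 : Amat - A' * M - E = -(T * A') := by
          calc Amat - A' * M - E = (Amat - E) - A' * M := by abel
            _ = A' * Bp n r - A' * M := by rw [h4]
            _ = -(T * A') := e3
        calc φ * M = D * Amat * M - A' * M - E * D * M := by rw [hφ, sub_mul, sub_mul]
          _ = (Amat + T * (D * Amat)) - A' * M - (E + T * (E * D)) := by rw [e1, e2]
          _ = (Amat - A' * M - E) + (T * (D * Amat) - T * (E * D)) := by abel
          _ = -(T * A') + (T * (D * Amat) - T * (E * D)) := by rw [h5]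
          _ = T * (D * Amat) - T * A' - T * (E * D) := by abel
          _ = T * φ := by rw [hφ, mul_sub, mul_sub]
      · rw [if_neg hj]
        have hDM : D * Mk n j = Mk n j * D := CI1 hr hj
        have h1 : D * Amat * Mk n j = Mk n j * (D * Amat) := by
          rw [mul_assoc, (hA j).eq, ← mul_assoc, hDM, mul_assoc]
        have h3 : E * D * Mk n j = Mk n j * (E * D) := by
          rw [mul_assoc, hDM, ← mul_assoc, (hEC j).eq, mul_assoc]
        calc φ * Mk n j = D * Amat * Mk n j - A' * Mk n j - E * D * Mk n j := by
              rw [hφ, sub_mul, sub_mul]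
          _ = Mk n j * (D * Amat) - Mk n j * A' - Mk n j * (E * D) := by
              rw [h1, h3, (hA' j).eq]
          _ = Mk n j * φ := by rw [hφ, mul_sub, mul_sub]
    · rw [hφ, Matrix.sub_mulVec, Matrix.sub_mulVec]
      rw [← Matrix.mulVec_mulVec, hinit, ← Matrix.mulVec_mulVec, Dmat_e1,
        Matrix.mulVec_zero]
      abel
  have hzero : D * Amat - (A' + E * D) = 0 := by
    calc D * Amat - (A' + E * D) = φ := by rw [hφ]; abel
      _ = 0 := hφz
  exact sub_eq_zero.mp hzero


end SchubRec

open SchubRec Matrix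

/-- For `u, v, w ∈ S_n` with `ℓ(w) = ℓ(u) + ℓ(v)` and a simple reflection `s_r` with
`ℓ(u s_r) > ℓ(u)` and `ℓ(v s_r) > ℓ(v)`: if `ℓ(w s_r) > ℓ(w)` then
`N_{u,v}^w = N_{u s_r, v}^{w s_r}`, and if `ℓ(w s_r) < ℓ(w)` then `N_{u,v}^w = 0`. -/
theorem schubert_recursion (n : ℕ) (N : Sn n → Sn n → Sn n → ℤ)
    (hN : IsSchubertConstants n N) (u v w : Sn n) (hlw : len w = len u + len v)
    (r : ℕ) (hr : r + 1 < n)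
    (hu : len u < len (u * simpleRefl n r hr))
    (hv : len v < len (v * simpleRefl n r hr)) :
    (len w < len (w * simpleRefl n r hr) →
      N u v w = N (u * simpleRefl n r hr) v (w * simpleRefl n r hr)) ∧
    (len (w * simpleRefl n r hr) < len w → N u v w = 0) := by
  obtain ⟨A, instA, σ, hLI, hone, hprod, _hgrade, hmonk⟩ := hN
  have hMM : ∀ j k : ℤ, Commute (Mk n j) (Mk n k) := Mk_commute_Mk hLI hprod hmonk
  have hNM : ∀ (x : Sn n) (j : ℤ), Commute (Nmat N x) (Mk n j) :=
    fun x j => Nmat_commute_Mk hLI hprod hmonk x j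
  have hNe1 : ∀ x : Sn n, Nmat N x *ᵥ Pi.single 1 1 = Pi.single x 1 :=
    Nmat_mulVec_single hLI hone hprod
  have hu' : u (posr hr) < u (posr1 hr) := (lt_len_s_iff hr u).1 hu
  have hv' : v (posr hr) < v (posr1 hr) := (lt_len_s_iff hr v).1 hv
  constructor
  · -- length increases : N u v w = N (u s) v (w s)
    intro hlt
    have hw' : w (posr hr) < w (posr1 hr) := (lt_len_s_iff hr w).1 hlt
    set x := u * simpleRefl n r hr with hx
    have hxdesc : x (posr1 hr) < x (posr hr) := by
      have e1 : x (posr1 hr) = u (posr hr) := by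
        rw [hx]; show u (simpleRefl n r hr (posr1 hr)) = _; rw [s_posr1]
      have e2 : x (posr hr) = u (posr1 hr) := by
        rw [hx]; show u (simpleRefl n r hr (posr hr)) = _; rw [s_posr]
      rw [e1, e2]; exact hu'
    have hxs : x * simpleRefl n r hr = u := by rw [hx, mul_s_s]
    have hop := OpId hr hMM (hNM x) (hNM u) (by
      rw [hNe1 x, Dmat_mulVec_single hr x, if_pos hxdesc, hxs, hNe1 u])
    have hent : (Dmat hr * Nmat N x) w v =
        (Nmat N u + (Nmat N x - Nmat N u * Bp n r) * Dmat hr) w v := by rw [hop]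
    rw [Dmat_mul, if_pos hw', Matrix.add_apply, mul_Dmat, if_neg (not_lt_of_gt hv'),
      add_zero] at hent
    exact hent.symm
  · -- length decreases : N u v w = 0
    intro hlt
    have hw' : w (posr1 hr) < w (posr hr) := (gt_len_s_iff hr w).1 hlt
    have hop := OpId hr hMM (hNM u) (fun j => Commute.zero_left _) (by
      rw [hNe1 u, Dmat_mulVec_single hr u, if_neg (not_lt_of_gt hu'), Matrix.zero_mulVec])
    have hop2 : Dmat hr * Nmat N u = Nmat N u * Dmat hr := by
      rw [hop, Matrix.zero_mul, sub_zero, zero_add]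
    set z := w * simpleRefl n r hr with hz
    have hzasc : z (posr hr) < z (posr1 hr) := by
      have e1 : z (posr1 hr) = w (posr hr) := by
        rw [hz]; show w (simpleRefl n r hr (posr1 hr)) = _; rw [s_posr1]
      have e2 : z (posr hr) = w (posr1 hr) := by
        rw [hz]; show w (simpleRefl n r hr (posr hr)) = _; rw [s_posr]
      rw [e1, e2]; exact hw'
    have hzs : z * simpleRefl n r hr = w := by rw [hz, mul_s_s]
    have hent : (Dmat hr * Nmat N u) z v = (Nmat N u * Dmat hr) z v := by rw [hop2]
    rw [Dmat_mul, if_pos hzasc, hzs, mul_Dmat, if_neg (not_lt_of_gt hv')] at hent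
    exact hent
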